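/- arXiv:1604.04258 — 7 statements merged into one kernel-verified Lean document; each statement's English description precedes it below -/
import Mathlib

section
/- Let n ≥ 2 and let F be a field of characteristic 0. On the polynomial ring F[x_1,…,x_n] define the n-ary bracket [f_1,…,f_n] = det((∂f_j/∂x_i)_{i,j=1}^n), the Jacobian determinant. Then this bracket satisfies the Filippov–Jacobi identity: for all g_1,…,g_{n-1}, f_1,…,f_n ∈ F[x_1,…,x_n], [g_1,…,g_{n-1},[f_1,…,f_n]] = Σ_{k=1}^n [f_1,…,f_{k-1},[g_1,…,g_{n-1},f_k],f_{k+1},…,f_n]. (Together with the alternating property of the determinant, this makes F[x_1,…,x_n] — and hence its completion F[[x_1,…,x_n]], the algebra S^n — an n-Lie algebra.) -/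
open MvPolynomial Finset

/-- Append an element at the end of a family indexed by `Fin (n-1)`,
producing a family indexed by `Fin n` (the last slot gets the new element). -/
def snocFam {α : Type*} {n : ℕ} (g : Fin (n - 1) → α) (x : α) : Fin n → α :=
  fun i => if h : (i : ℕ) < n - 1 then g ⟨i, h⟩ else x

/-- The Jacobian-determinant `n`-ary bracket on `F[x_1,…,x_n]`. -/
noncomputable def jacobiBracket (F : Type*) [Field F] (n : ℕ)
    (f : Fin n → MvPolynomial (Fin n) F) : MvPolynomial (Fin n) F :=
  Matrix.det (Matrix.of fun i j => pderiv i (f j))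

set_option linter.unusedSectionVars false

section A
variable {R : Type*} [CommSemiring R] {σ : Type*} [DecidableEq σ]

variable {R : Type*} [CommSemiring R] {σ : Type*} [DecidableEq σ]

theorem pderiv_pderiv_comm (a b : σ) (p : MvPolynomial σ R) :
    pderiv a (pderiv b p) = pderiv b (pderiv a p) := by
  induction p using MvPolynomial.induction_on' with
  | add p q hp hq => simp [hp, hq]
  | monomial s c =>
    rcases eq_or_ne a b with rfl | hab
    · rfl
    simp only [pderiv_monomial]
    rw [tsub_right_comm]
    congr 1
    rw [Finsupp.tsub_apply, Finsupp.tsub_apply, Finsupp.single_apply, Finsupp.single_apply,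
      if_neg hab, if_neg (Ne.symm hab), Nat.sub_zero, Nat.sub_zero]
    ring

theorem pderiv_finset_prod {ι : Type*} [DecidableEq ι] (a : σ) (s : Finset ι)
    (f : ι → MvPolynomial σ R) :
    pderiv a (∏ i ∈ s, f i) = ∑ i ∈ s, (∏ j ∈ s.erase i, f j) * pderiv a (f i) := by
  induction s using Finset.induction_on with
  | empty => simp
  | @insert c s hc ih =>
    rw [Finset.prod_insert hc, pderiv_mul, ih, Finset.mul_sum, Finset.sum_insert hc,
      Finset.erase_insert hc]
    congr 1
    · exact mul_comm _ _
    · refine Finset.sum_congr rfl fun i hi => ?_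
      rw [Finset.erase_insert_of_ne (fun h' => hc ((h' : c = i) ▸ hi)), Finset.prod_insert
        (fun hmem => hc (Finset.mem_of_mem_erase hmem))]
      ring

end A
theorem pderiv_det {R : Type*} [CommRing R] {σ : Type*} [DecidableEq σ]
    {ι : Type*} [DecidableEq ι] [Fintype ι] (a : σ)
    (M : Matrix ι ι (MvPolynomial σ R)) :
    pderiv a M.det = ∑ k, (M.updateCol k fun i => pderiv a (M i k)).det := by
  simp only [Matrix.det_apply', map_sum]
  rw [Finset.sum_comm]
  refine Finset.sum_congr rfl fun c _ => ?_
  rw [show ((Equiv.Perm.sign c : ℤ) : MvPolynomial σ R) = C ((Equiv.Perm.sign c : ℤ) : R) from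
    (map_intCast (C : R →+* MvPolynomial σ R) _).symm, pderiv_C_mul, pderiv_finset_prod, Finset.mul_sum]
  refine Finset.sum_congr rfl fun k _ => ?_
  congr 1
  rw [← Finset.mul_prod_erase _ _ (Finset.mem_univ k), Matrix.updateCol_apply, if_pos rfl,
    mul_comm]
  congr 1
  refine Finset.prod_congr rfl fun j hj => ?_
  rw [Matrix.updateCol_apply, if_neg (Finset.ne_of_mem_erase hj)]

section C
variable {R : Type*} [CommRing R] {ι : Type*} [DecidableEq ι] [Fintype ι]

theorem det_updateColumn_finset_sum {β : Type*} [DecidableEq β] (M : Matrix ι ι R) (k : ι)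
    (s : Finset β) (f : β → ι → R) :
    (M.updateCol k fun i => ∑ j ∈ s, f j i).det = ∑ j ∈ s, (M.updateCol k (f j)).det := by
  induction s using Finset.induction_on with
  | empty =>
    simp only [Finset.sum_empty]
    exact Matrix.det_eq_zero_of_column_eq_zero k fun i => by
      simp [Matrix.updateCol_apply]
  | @insert c s hc ih =>
    simp only [Finset.sum_insert hc]
    rw [← ih, ← Matrix.det_updateCol_add]
    congr 1

theorem det_updateColumn_single (M : Matrix ι ι R) (k p : ι) :
    (M.updateCol k (Pi.single p 1)).det = M.adjugate k p := by
  have h : M.adjugate k p = ((Matrix.transpose M).updateRow k (Pi.single p 1)).det := by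
    rw [← Matrix.transpose_apply (Matrix.adjugate M), Matrix.adjugate_transpose,
      Matrix.adjugate_apply]
  rw [h, Matrix.updateRow_transpose, Matrix.det_transpose]

theorem sum_det_updateColumn_mul (A M : Matrix ι ι R) :
    ∑ k, (M.updateCol k fun i => (A * M) i k).det = A.trace * M.det := by
  have col : ∀ k, (fun i => (A * M) i k)
      = fun i => ∑ p, M p k * (∑ q, A q p * (Pi.single q 1 : ι → R) i) := by
    intro k
    funext i
    simp only [Matrix.mul_apply]
    refine Finset.sum_congr rfl fun p _ => ?_
    rw [Finset.mul_sum, Finset.sum_eq_single i]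
    · simp [mul_comm]
    · intro q _ hq
      simp [Pi.single_apply, hq]
    · simp
  calc ∑ k, (M.updateCol k fun i => (A * M) i k).det
      = ∑ k, ∑ p, ∑ q, M p k * (A q p * (M.updateCol k (Pi.single q 1)).det) := by
        refine Finset.sum_congr rfl fun k _ => ?_
        rw [col k, det_updateColumn_finset_sum]
        refine Finset.sum_congr rfl fun p _ => ?_
        rw [show (fun i => M p k * ∑ q, A q p * (Pi.single q 1 : ι → R) i)
            = M p k • fun i => ∑ q, A q p * (Pi.single q 1 : ι → R) i from rfl,
          Matrix.det_updateCol_smul, det_updateColumn_finset_sum, Finset.mul_sum]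
        refine Finset.sum_congr rfl fun q _ => ?_
        rw [show (fun i => A q p * (Pi.single q 1 : ι → R) i)
            = A q p • (Pi.single q 1 : ι → R) from rfl, Matrix.det_updateCol_smul]
    _ = ∑ p, ∑ q, A q p * ((M * M.adjugate) p q) := by
        rw [Finset.sum_comm]
        refine Finset.sum_congr rfl fun p _ => ?_
        rw [Finset.sum_comm]
        refine Finset.sum_congr rfl fun q _ => ?_
        rw [Matrix.mul_apply, Finset.mul_sum]
        refine Finset.sum_congr rfl fun k _ => ?_
        rw [det_updateColumn_single]
        ring
    _ = A.trace * M.det := by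
        rw [Matrix.mul_adjugate, Matrix.trace, Finset.sum_mul]
        refine Finset.sum_congr rfl fun p _ => ?_
        rw [Finset.sum_eq_single p]
        · simp [Matrix.diag]
        · intro q _ hq
          simp [Matrix.one_apply, Ne.symm hq]
        · simp

end C

section Filippov
variable {F : Type*} [Field F] {n : ℕ}

/-- base matrix of the g-family -/
noncomputable def gMat (g : Fin (n - 1) → MvPolynomial (Fin n) F) :
    Matrix (Fin n) (Fin n) (MvPolynomial (Fin n) F) :=
  Matrix.of fun i j => pderiv i (snocFam g 0 j)

/-- the cofactor vector field -/
noncomputable def cofV (hn : 0 < n) (g : Fin (n - 1) → MvPolynomial (Fin n) F) (p : Fin n) :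
    MvPolynomial (Fin n) F :=
  ((gMat g).updateCol ⟨n - 1, Nat.sub_lt hn one_pos⟩ (Pi.single p 1)).det

theorem matrix_eq (hn : 0 < n) (g : Fin (n - 1) → MvPolynomial (Fin n) F)
    (h : MvPolynomial (Fin n) F) :
    (Matrix.of fun i j => pderiv i (snocFam g h j))
      = (gMat g).updateCol ⟨n - 1, Nat.sub_lt hn one_pos⟩ (fun i => pderiv i h) := by
  ext i j
  rw [Matrix.updateCol_apply]
  by_cases hj : (j : ℕ) < n - 1
  · rw [if_neg (by intro hh; rw [hh] at hj; simp at hj)]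
    simp only [Matrix.of_apply, gMat, snocFam, dif_pos hj]
  · rw [if_pos (by have := j.isLt; exact Fin.ext (show (j:ℕ) = n - 1 by omega))]
    simp only [Matrix.of_apply, snocFam, dif_neg hj]

theorem bracket_expand (hn : 0 < n) (g : Fin (n - 1) → MvPolynomial (Fin n) F)
    (h : MvPolynomial (Fin n) F) :
    jacobiBracket F n (snocFam g h) = ∑ p, pderiv p h * cofV hn g p := by
  rw [jacobiBracket, matrix_eq hn g h]
  rw [show (fun i => pderiv i h)
      = fun i => ∑ p, pderiv p h * (Pi.single p 1 : Fin n → MvPolynomial (Fin n) F) i by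
    funext i
    rw [Finset.sum_eq_single i (fun p _ hp => by simp [Pi.single_apply, Ne.symm hp]) (by simp)]
    simp]
  rw [det_updateColumn_finset_sum]
  refine Finset.sum_congr rfl fun p _ => ?_
  rw [show (fun i => pderiv p h * (Pi.single p 1 : Fin n → MvPolynomial (Fin n) F) i)
      = pderiv p h • (Pi.single p 1 : Fin n → MvPolynomial (Fin n) F) from rfl,
    Matrix.det_updateCol_smul]
  rfl

end Filippov

theorem vec_expand {R : Type*} [CommSemiring R] {ι : Type*} [Fintype ι] [DecidableEq ι]
    (v : ι → R) : v = fun i => ∑ r, v r * (Pi.single r 1 : ι → R) i := by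
  funext i
  rw [Finset.sum_eq_single i (fun r _ hr => by simp [Pi.single_apply, Ne.symm hr]) (by simp)]
  simp

theorem sym_antisym_sum {R : Type*} [CommRing R] [CharZero R] [IsDomain R] {ι : Type*}
    [Fintype ι] (h D : ι → ι → R) (hsym : ∀ p r, h p r = h r p)
    (hanti : ∀ p r, D p r = - D r p) :
    ∑ p, ∑ r, h p r * D p r = 0 := by
  have hS : (∑ p, ∑ r, h p r * D p r) = - ∑ p, ∑ r, h p r * D p r := by
    calc ∑ p, ∑ r, h p r * D p r
        = ∑ p, ∑ r, h r p * (- D r p) := by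
          refine Finset.sum_congr rfl fun p _ => Finset.sum_congr rfl fun r _ => ?_
          rw [hsym p r, hanti p r]
      _ = - ∑ p, ∑ r, h r p * D r p := by
          rw [← Finset.sum_neg_distrib]
          refine Finset.sum_congr rfl fun p _ => ?_
          rw [← Finset.sum_neg_distrib]
          exact Finset.sum_congr rfl fun r _ => by ring
      _ = - ∑ p, ∑ r, h p r * D p r := by rw [Finset.sum_comm]
  rcases mul_eq_zero.mp (show (2:R) * (∑ p, ∑ r, h p r * D p r) = 0 by
      rw [two_mul]; nth_rewrite 1 [hS]; ring) with h2 | h2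
  · exact absurd h2 two_ne_zero
  · exact h2

section DivFree
variable {F : Type*} [Field F] {n : ℕ}

theorem cof_div_free [CharZero F] (hn : 0 < n) (g : Fin (n - 1) → MvPolynomial (Fin n) F) :
    ∑ p, pderiv p (cofV hn g p) = 0 := by
  set lst : Fin n := ⟨n - 1, Nat.sub_lt hn one_pos⟩ with hlst
  have step1 : ∀ p : Fin n, pderiv p (cofV hn g p)
      = ∑ k ∈ Finset.univ.erase lst,
          (((gMat g).updateCol lst (Pi.single p 1)).updateCol k
            (fun i => pderiv p (((gMat g).updateCol lst (Pi.single p 1)) i k))).det := by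
    intro p
    have hz : (((gMat g).updateCol lst (Pi.single p 1)).updateCol lst
        (fun i => pderiv p (((gMat g).updateCol lst (Pi.single p 1)) i lst))).det = 0 := by
      apply Matrix.det_eq_zero_of_column_eq_zero lst
      intro i
      rw [Matrix.updateCol_apply, if_pos rfl, Matrix.updateCol_apply, if_pos rfl,
        Pi.single_apply]
      split <;> simp
    rw [cofV, pderiv_det, ← Finset.add_sum_erase _ _ (Finset.mem_univ lst), hz, zero_add]
  rw [Finset.sum_congr rfl fun p _ => step1 p, Finset.sum_comm]
  refine Finset.sum_eq_zero fun k hk => ?_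
  have hkl : k ≠ lst := Finset.ne_of_mem_erase hk
  -- the column entries are second derivatives of G
  set G : MvPolynomial (Fin n) F := snocFam g 0 k with hG
  have hcol : ∀ p : Fin n, (fun i => pderiv p (((gMat g).updateCol lst (Pi.single p 1)) i k))
      = fun i => pderiv p (pderiv i G) := by
    intro p
    funext i
    rw [Matrix.updateCol_apply, if_neg hkl]
    rfl
  have hanti : ∀ p r : Fin n,
      (((gMat g).updateCol lst (Pi.single p 1)).updateCol k (Pi.single r 1)).det
      = - (((gMat g).updateCol lst (Pi.single r 1)).updateCol k (Pi.single p 1)).det := by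
    intro p r
    have hswap : ((gMat g).updateCol lst (Pi.single p 1)).updateCol k (Pi.single r 1)
        = (((gMat g).updateCol lst (Pi.single r 1)).updateCol k
            (Pi.single p 1)).submatrix id (Equiv.swap lst k) := by
      ext i j
      rw [Matrix.submatrix_apply, id_eq]
      by_cases hj1 : j = lst
      · subst hj1
        rw [Equiv.swap_apply_left, Matrix.updateCol_apply, if_neg (Ne.symm hkl),
          Matrix.updateCol_apply, if_pos rfl, Matrix.updateCol_apply, if_pos rfl]
      · by_cases hj2 : j = k
        · subst hj2
          rw [Equiv.swap_apply_right, Matrix.updateCol_apply, if_pos rfl,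
            Matrix.updateCol_apply, if_neg (Ne.symm hkl), Matrix.updateCol_apply,
            if_pos rfl]
        · rw [Equiv.swap_apply_of_ne_of_ne hj1 hj2, Matrix.updateCol_apply, if_neg hj2,
            Matrix.updateCol_apply, if_neg hj1, Matrix.updateCol_apply, if_neg hj2,
            Matrix.updateCol_apply, if_neg hj1]
    rw [hswap, Matrix.det_permute', Equiv.Perm.sign_swap (Ne.symm hkl)]
    simp
  calc ∑ p : Fin n, (((gMat g).updateCol lst (Pi.single p 1)).updateCol k
          (fun i => pderiv p (((gMat g).updateCol lst (Pi.single p 1)) i k))).det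
      = ∑ p : Fin n, ∑ r : Fin n, pderiv p (pderiv r G) *
          (((gMat g).updateCol lst (Pi.single p 1)).updateCol k (Pi.single r 1)).det := by
        refine Finset.sum_congr rfl fun p _ => ?_
        rw [hcol p]
        rw [show (fun i => pderiv p (pderiv i G))
            = fun i => ∑ r, pderiv p (pderiv r G) *
              (Pi.single r 1 : Fin n → MvPolynomial (Fin n) F) i from
          vec_expand _]
        rw [det_updateColumn_finset_sum]
        refine Finset.sum_congr rfl fun r _ => ?_
        rw [show (fun i => pderiv p (pderiv r G) *
              (Pi.single r 1 : Fin n → MvPolynomial (Fin n) F) i)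
            = pderiv p (pderiv r G) • (Pi.single r 1 : Fin n → MvPolynomial (Fin n) F) from rfl,
          Matrix.det_updateCol_smul]
    _ = 0 := by
        refine sym_antisym_sum _ _ (fun p r => pderiv_pderiv_comm p r G) hanti

end DivFree
section Main
variable {F : Type*} [Field F] {n : ℕ}

theorem jac_update (f : Fin n → MvPolynomial (Fin n) F) (k : Fin n)
    (h : MvPolynomial (Fin n) F) :
    jacobiBracket F n (Function.update f k h)
      = ((Matrix.of fun i j => pderiv i (f j)).updateCol k (fun i => pderiv i h)).det := by
  rw [jacobiBracket]
  congr 1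
  ext i j
  rw [Matrix.updateCol_apply, Matrix.of_apply, Matrix.of_apply, Function.update_apply]
  split_ifs <;> rfl

end Main

/-- The Jacobian determinant bracket on the polynomial ring `F[x_1,…,x_n]`
(`char F = 0`, `n ≥ 2`) satisfies the Filippov–Jacobi identity. -/
theorem jacobiBracket_filippov (F : Type*) [Field F] [CharZero F] (n : ℕ) (hn : 2 ≤ n)
    (g : Fin (n - 1) → MvPolynomial (Fin n) F) (f : Fin n → MvPolynomial (Fin n) F) :
    jacobiBracket F n (snocFam g (jacobiBracket F n f)) =
      ∑ k : Fin n,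
        jacobiBracket F n (Function.update f k (jacobiBracket F n (snocFam g (f k)))) := by
  have hn0 : 0 < n := by omega
  set Mf : Matrix (Fin n) (Fin n) (MvPolynomial (Fin n) F) :=
    Matrix.of fun i j => pderiv i (f j) with hMf
  -- rewrite each summand of the RHS
  have hR : ∀ k, jacobiBracket F n (Function.update f k (jacobiBracket F n (snocFam g (f k))))
      = (Mf.updateCol k fun i => ∑ p, pderiv i (pderiv p (f k)) * cofV hn0 g p).det
        + (Mf.updateCol k fun i => ∑ p, pderiv p (f k) * pderiv i (cofV hn0 g p)).det := by
    intro k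
    rw [jac_update, bracket_expand hn0 g (f k),
      show (fun i => pderiv i (∑ p, pderiv p (f k) * cofV hn0 g p))
        = (fun i => ∑ p, pderiv i (pderiv p (f k)) * cofV hn0 g p)
          + (fun i => ∑ p, pderiv p (f k) * pderiv i (cofV hn0 g p)) by
        funext i
        simp only [Pi.add_apply]
        rw [map_sum, ← Finset.sum_add_distrib]
        exact Finset.sum_congr rfl fun p _ => pderiv_mul,
      Matrix.det_updateCol_add]
  rw [Finset.sum_congr rfl fun k _ => hR k, Finset.sum_add_distrib]
  -- the second half vanishes by divergence-freeness
  have h2 : ∑ k, (Mf.updateCol k fun i => ∑ p, pderiv p (f k) *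
      pderiv i (cofV hn0 g p)).det = 0 := by
    have hc : ∀ k, (fun i => ∑ p, pderiv p (f k) * pderiv i (cofV hn0 g p))
        = fun i => ((Matrix.of fun i q => pderiv i (cofV hn0 g q)) * Mf) i k := by
      intro k
      funext i
      rw [Matrix.mul_apply]
      exact Finset.sum_congr rfl fun p _ => by
        rw [Matrix.of_apply, hMf, Matrix.of_apply]; ring
    rw [Finset.sum_congr rfl fun k _ => by rw [hc k], sum_det_updateColumn_mul]
    have htr : (Matrix.of fun i q => pderiv i (cofV hn0 g q)).trace
        = ∑ p, pderiv p (cofV hn0 g p) := by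
      simp [Matrix.trace, Matrix.diag]
    rw [htr, cof_div_free hn0 g, zero_mul]
  rw [h2, add_zero]
  -- the first half matches the LHS
  rw [bracket_expand hn0 g (jacobiBracket F n f),
    show jacobiBracket F n f = Mf.det from rfl]
  calc ∑ p, pderiv p Mf.det * cofV hn0 g p
      = ∑ p, ∑ k, (Mf.updateCol k fun i => pderiv p (Mf i k)).det * cofV hn0 g p := by
        refine Finset.sum_congr rfl fun p _ => ?_
        rw [pderiv_det, Finset.sum_mul]
    _ = ∑ k, (Mf.updateCol k fun i => ∑ p, pderiv i (pderiv p (f k)) * cofV hn0 g p).det := by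
        rw [Finset.sum_comm]
        refine Finset.sum_congr rfl fun k _ => ?_
        rw [show (fun i => ∑ p, pderiv i (pderiv p (f k)) * cofV hn0 g p)
            = fun i => ∑ p, cofV hn0 g p * pderiv p (Mf i k) by
          funext i
          refine Finset.sum_congr rfl fun p _ => ?_
          rw [show Mf i k = pderiv i (f k) from rfl, pderiv_pderiv_comm]
          ring]
        rw [det_updateColumn_finset_sum]
        refine Finset.sum_congr rfl fun p _ => ?_
        rw [show (fun i => cofV hn0 g p * pderiv p (Mf i k))
            = cofV hn0 g p • fun i => pderiv p (Mf i k) from rfl,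
          Matrix.det_updateCol_smul]
        ring
end

section
/- Let n ≥ 2 and let F be a field of characteristic 0. On the polynomial ring F[x_1,…,x_{n-1}] define the n-ary bracket [f_1,…,f_n] = det of the n×n matrix whose first row is (f_1,…,f_n) and whose (i+1)-st row is (∂f_1/∂x_i,…,∂f_n/∂x_i) for i = 1,…,n−1. Then this bracket satisfies the Filippov–Jacobi identity: for all g_1,…,g_{n-1}, f_1,…,f_n ∈ F[x_1,…,x_{n-1}], [g_1,…,g_{n-1},[f_1,…,f_n]] = Σ_{k=1}^n [f_1,…,f_{k-1},[g_1,…,g_{n-1},f_k],f_{k+1},…,f_n]. (This is the n-Lie algebra structure underlying W^n.) -/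
open MvPolynomial

/-- The `n`-ary bracket on `F[x_1,…,x_{n-1}]` underlying the `n`-Lie algebra `W^n`:
the determinant of the `n×n` matrix whose first row is `(f_1,…,f_n)` and whose
`(i+1)`-st row is `(∂f_1/∂x_i, …, ∂f_n/∂x_i)` for `i = 1,…,n-1`. -/
noncomputable def wBracket (F : Type*) [Field F] (n : ℕ)
    (f : Fin n → MvPolynomial (Fin (n - 1)) F) : MvPolynomial (Fin (n - 1)) F :=
  Matrix.det (Matrix.of fun (i : Fin n) (j : Fin n) =>
    if h : (i : ℕ) = 0 then f j
    else pderiv (⟨(i : ℕ) - 1, by have := i.isLt; omega⟩ : Fin (n - 1)) (f j))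


namespace WBAux
open Matrix
section generic


lemma pderiv_pderiv_comm {σ K : Type*} [DecidableEq σ] [CommSemiring K]
    (i j : σ) (p : MvPolynomial σ K) :
    pderiv i (pderiv j p) = pderiv j (pderiv i p) := by
  induction p using MvPolynomial.induction_on' with
  | add p q hp hq => simp [hp, hq]
  | monomial s a =>
      rcases eq_or_ne i j with rfl | hij
      · rfl
      · simp only [pderiv_monomial]
        rw [Finsupp.tsub_apply, Finsupp.single_eq_of_ne hij, Nat.sub_zero,
          Finsupp.tsub_apply, Finsupp.single_eq_of_ne (Ne.symm hij), Nat.sub_zero,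
          tsub_tsub, tsub_tsub, add_comm]
        ring_nf

lemma pderiv_finset_prod {σ K ι : Type*} [DecidableEq σ] [CommSemiring K] [DecidableEq ι]
    (t : σ) (s : Finset ι) (f : ι → MvPolynomial σ K) :
    pderiv t (∏ i ∈ s, f i) = ∑ i ∈ s, (∏ j ∈ s.erase i, f j) * pderiv t (f i) := by
  induction s using Finset.induction_on with
  | empty => simp
  | @insert a s ha ih =>
      rw [Finset.prod_insert ha, pderiv_mul, ih, Finset.sum_insert ha, Finset.erase_insert ha,
        Finset.mul_sum]
      congr 1
      · ring
      · refine Finset.sum_congr rfl fun i hi => ?_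
        rw [Finset.erase_insert_of_ne (by rintro rfl; exact ha hi),
          Finset.prod_insert (fun h => ha (Finset.mem_of_mem_erase h))]
        ring

variable {K : Type*} [CommRing K] {N : Type*} [DecidableEq N] [Fintype N]

lemma det_updateRow_finset_sum (M : Matrix N N K) (k : N) {ι : Type*} (s : Finset ι)
    (v : ι → N → K) :
    (M.updateRow k (∑ i ∈ s, v i)).det = ∑ i ∈ s, (M.updateRow k (v i)).det := by
  classical
  induction s using Finset.induction_on with
  | empty =>
      simp only [Finset.sum_empty]
      exact det_eq_zero_of_row_eq_zero k (by simp)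
  | @insert a s ha ih =>
      rw [Finset.sum_insert ha, Finset.sum_insert ha, det_updateRow_add, ih]

lemma det_updateRow_expand (M : Matrix N N K) (k : N) (v : N → K) :
    (M.updateRow k v).det = ∑ q, v q * (M.updateRow k (Pi.single q 1)).det := by
  have hv : v = ∑ q : N, v q • (Pi.single q 1 : N → K) := by
    funext p
    simp [Finset.sum_apply, Pi.single_apply, mul_ite]
  conv_lhs => rw [hv]
  rw [det_updateRow_finset_sum]
  exact Finset.sum_congr rfl fun q _ => by rw [det_updateRow_smul]

lemma sum_mul_det_updateRow_single (M : Matrix N N K) (p q : N) :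
    ∑ k, M k q * (M.updateRow k (Pi.single p 1)).det = if p = q then M.det else 0 := by
  have h1 : ∀ k, (M.updateRow k (Pi.single p 1)).det = adjugate M p k :=
    fun k => (adjugate_apply M p k).symm
  simp_rw [h1]
  calc ∑ k, M k q * adjugate M p k = ∑ k, adjugate M p k * M k q := by
        exact Finset.sum_congr rfl fun k _ => mul_comm _ _
    _ = (adjugate M * M) p q := (Matrix.mul_apply).symm
    _ = (M.det • (1 : Matrix N N K)) p q := by rw [Matrix.adjugate_mul]
    _ = if p = q then M.det else 0 := by
        simp [Matrix.smul_apply, Matrix.one_apply, mul_ite]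

lemma updateRow_comm' {α : Type*} (A : Matrix N N α) {i j : N} (h : i ≠ j) (u v : N → α) :
    (A.updateRow i u).updateRow j v = (A.updateRow j v).updateRow i u := by
  ext a b
  rcases eq_or_ne a j with rfl | haj
  · rw [updateRow_self, updateRow_ne h.symm, updateRow_self]
  · rw [updateRow_ne haj]
    rcases eq_or_ne a i with rfl | hai
    · rw [updateRow_self, updateRow_self]
    · rw [updateRow_ne hai, updateRow_ne hai, updateRow_ne haj]

lemma pderiv_det_col {σ L : Type*} [DecidableEq σ] [CommRing L] (t : σ)
    (M : Matrix N N (MvPolynomial σ L)) :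
    pderiv t M.det = ∑ k, (M.updateCol k fun r => pderiv t (M r k)).det := by
  classical
  simp_rw [Matrix.det_apply']
  rw [map_sum]
  have hterm : ∀ sg : Equiv.Perm N,
      pderiv t (((Equiv.Perm.sign sg : ℤ) : MvPolynomial σ L) * ∏ i, M (sg i) i)
      = ∑ k, ((Equiv.Perm.sign sg : ℤ) : MvPolynomial σ L) *
          ((∏ j ∈ Finset.univ.erase k, M (sg j) j) * pderiv t (M (sg k) k)) := by
    intro sg
    rw [show ((Equiv.Perm.sign sg : ℤ) : MvPolynomial σ L) * ∏ i, M (sg i) i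
        = (Equiv.Perm.sign sg : ℤ) • ∏ i, M (sg i) i from (zsmul_eq_mul _ _).symm,
      map_zsmul, pderiv_finset_prod, Finset.smul_sum]
    exact Finset.sum_congr rfl fun k _ => by rw [zsmul_eq_mul]
  simp_rw [hterm]
  rw [Finset.sum_comm]
  refine Finset.sum_congr rfl fun k _ => ?_
  refine Finset.sum_congr rfl fun sg _ => ?_
  congr 1
  rw [← Finset.mul_prod_erase Finset.univ _ (Finset.mem_univ k)]
  rw [Matrix.updateCol_self]
  rw [mul_comm]
  congr 1
  refine Finset.prod_congr rfl fun i hi => ?_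
  rw [Matrix.updateCol_apply, if_neg (Finset.ne_of_mem_erase hi)]

lemma pderiv_det_row {σ L : Type*} [DecidableEq σ] [CommRing L] (t : σ)
    (M : Matrix N N (MvPolynomial σ L)) :
    pderiv t M.det = ∑ k, (M.updateRow k fun i => pderiv t (M k i)).det := by
  rw [← Matrix.det_transpose M, pderiv_det_col t Mᵀ]
  refine Finset.sum_congr rfl fun k _ => ?_
  rw [← Matrix.det_transpose]
  congr 1
  rw [Matrix.updateCol_transpose, Matrix.transpose_transpose]
  rfl

lemma sum_symm_antisymm_eq_zero {L : Type*} [CommRing L] [NoZeroDivisors L]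
    (h2 : (2 : L) ≠ 0) {ι : Type*} [Fintype ι] (s a : ι → ι → L)
    (hs : ∀ p q, s p q = s q p) (ha : ∀ p q, a p q = - a q p) :
    ∑ p, ∑ q, s p q * a p q = 0 := by
  have h : (∑ p, ∑ q, s p q * a p q) = - ∑ p, ∑ q, s p q * a p q := by
    conv_lhs => rw [Finset.sum_comm]
    rw [← Finset.sum_neg_distrib]
    refine Finset.sum_congr rfl fun q _ => ?_
    rw [← Finset.sum_neg_distrib]
    refine Finset.sum_congr rfl fun p _ => ?_
    rw [hs q p, ha q p]
    ring
  have h2' : (2 : L) * (∑ p, ∑ q, s p q * a p q) = 0 := by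
    rw [two_mul]
    nth_rewrite 2 [h]
    ring
  rcases mul_eq_zero.mp h2' with h' | h'
  · exact absurd h' h2
  · exact h'


end generic

section w


open Matrix

variable (F : Type*) [Field F] (m : ℕ)

noncomputable def rv (p : MvPolynomial (Fin m) F) : Fin (m + 1) → MvPolynomial (Fin m) F :=
  fun i => if h : (i : ℕ) = 0 then p else pderiv (⟨(i : ℕ) - 1, by omega⟩ : Fin m) p

@[simp] lemma rv_zero (p : MvPolynomial (Fin m) F) : rv F m p 0 = p := by
  simp [rv]

@[simp] lemma rv_succ (p : MvPolynomial (Fin m) F) (i : Fin m) :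
    rv F m p i.succ = pderiv i p := by
  rw [rv, dif_neg (by simp)]
  try congr 1
  try exact Fin.ext (by simp)

noncomputable def gmat (g : Fin m → MvPolynomial (Fin m) F)
    (w : Fin (m + 1) → MvPolynomial (Fin m) F) :
    Matrix (Fin (m + 1)) (Fin (m + 1)) (MvPolynomial (Fin m) F) :=
  Matrix.of fun j i => if h : (j : ℕ) < m then rv F m (g ⟨j, h⟩) i else w i

variable (g : Fin m → MvPolynomial (Fin m) F)

lemma gmat_row_castSucc (w : Fin (m + 1) → MvPolynomial (Fin m) F) (k : Fin m) :
    gmat F m g w k.castSucc = rv F m (g k) := by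
  funext i
  show dite _ _ _ = _
  rw [dif_pos (by simpa using k.isLt)]
  try congr 2
  try exact Fin.ext (by simp)

lemma gmat_row_last (w : Fin (m + 1) → MvPolynomial (Fin m) F) :
    gmat F m g w (Fin.last m) = w := by
  funext i
  show dite _ _ _ = _
  rw [dif_neg (by simp)]

lemma gmat_updateRow_last (w w' : Fin (m + 1) → MvPolynomial (Fin m) F) :
    (gmat F m g w).updateRow (Fin.last m) w' = gmat F m g w' := by
  refine Matrix.ext fun j i => ?_
  rcases eq_or_ne j (Fin.last m) with rfl | hj
  · rw [Matrix.updateRow_self, gmat_row_last]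
  · rw [Matrix.updateRow_ne hj]
    have hj' : (j : ℕ) < m := by
      have := j.isLt
      have : (j : ℕ) ≠ m := fun h => hj (Fin.ext (by simp [h]))
      omega
    show dite _ _ _ = dite _ _ _
    rw [dif_pos hj', dif_pos hj']

noncomputable def matW (f : Fin (m + 1) → MvPolynomial (Fin m) F) :
    Matrix (Fin (m + 1)) (Fin (m + 1)) (MvPolynomial (Fin m) F) :=
  Matrix.of fun j i => rv F m (f j) i

lemma matW_row (f : Fin (m + 1) → MvPolynomial (Fin m) F) (j : Fin (m + 1)) :
    matW F m f j = rv F m (f j) := rfl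

lemma wBracket_eq (f : Fin (m + 1) → MvPolynomial (Fin m) F) :
    wBracket F (m + 1) f = (matW F m f).det := by
  rw [← Matrix.det_transpose]
  rfl

lemma matW_update (f : Fin (m + 1) → MvPolynomial (Fin m) F) (k : Fin (m + 1))
    (h : MvPolynomial (Fin m) F) :
    matW F m (Function.update f k h) = (matW F m f).updateRow k (rv F m h) := by
  refine Matrix.ext fun j i => ?_
  rcases eq_or_ne j k with rfl | hj
  · rw [Matrix.updateRow_self]
    show rv F m (Function.update f j h j) i = _
    rw [Function.update_self]
  · rw [Matrix.updateRow_ne hj]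
    show rv F m (Function.update f k h j) i = rv F m (f j) i
    rw [Function.update_of_ne hj]

lemma matW_snoc (p : MvPolynomial (Fin m) F) :
    matW F m (snocFam g p) = gmat F m g (rv F m p) := by
  refine Matrix.ext fun j i => ?_
  show rv F m (snocFam g p j) i = dite _ _ _
  rw [snocFam]
  simp only [Nat.add_sub_cancel]
  by_cases hj : (j : ℕ) < m
  · rw [dif_pos hj, dif_pos hj]
  · rw [dif_neg hj, dif_neg hj]

noncomputable def cg (q : Fin (m + 1)) : MvPolynomial (Fin m) F :=
  (gmat F m g (Pi.single q 1)).det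

noncomputable def dOp (p : MvPolynomial (Fin m) F) : MvPolynomial (Fin m) F :=
  (gmat F m g (rv F m p)).det

lemma wBracket_snoc (p : MvPolynomial (Fin m) F) :
    wBracket F (m + 1) (snocFam g p) = dOp F m g p := by
  rw [wBracket_eq, matW_snoc]
  rfl


lemma dOp_eq (p : MvPolynomial (Fin m) F) :
    dOp F m g p = ∑ q, rv F m p q * cg F m g q := by
  rw [dOp, ← gmat_updateRow_last F m g (Pi.single 0 1) (rv F m p), det_updateRow_expand]
  refine Finset.sum_congr rfl fun q _ => ?_
  rw [gmat_updateRow_last, cg]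

lemma psi_antisymm (k : Fin m) (v w : Fin (m + 1) → MvPolynomial (Fin m) F) :
    ((gmat F m g w).updateRow k.castSucc v).det
      = - ((gmat F m g v).updateRow k.castSucc w).det := by
  have hne : k.castSucc ≠ Fin.last m := (Fin.castSucc_lt_last k).ne
  have hzero : ∀ u, ((gmat F m g u).updateRow k.castSucc u).det = 0 := by
    intro u
    refine Matrix.det_zero_of_row_eq hne ?_
    rw [Matrix.updateRow_self, Matrix.updateRow_ne hne.symm, gmat_row_last]
  have hsnd : ∀ a b b', ((gmat F m g (b + b')).updateRow k.castSucc a).det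
      = ((gmat F m g b).updateRow k.castSucc a).det
        + ((gmat F m g b').updateRow k.castSucc a).det := by
    intro a b b'
    rw [← gmat_updateRow_last F m g b (b + b'),
      updateRow_comm' _ (Ne.symm hne), Matrix.det_updateRow_add,
      ← updateRow_comm' _ (Ne.symm hne), ← updateRow_comm' _ (Ne.symm hne),
      gmat_updateRow_last, gmat_updateRow_last]
  have hexp : ((gmat F m g (v + w)).updateRow k.castSucc (v + w)).det
      = ((gmat F m g (v + w)).updateRow k.castSucc v).det
        + ((gmat F m g (v + w)).updateRow k.castSucc w).det :=
    Matrix.det_updateRow_add _ _ _ _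
  rw [hzero, hsnd, hsnd, hzero, hzero] at hexp
  linear_combination -hexp

lemma two_ne_zero'' [CharZero F] : (2 : MvPolynomial (Fin m) F) ≠ 0 := by
  intro h
  have hC : (C (2 : F) : MvPolynomial (Fin m) F) = C (0 : F) := by simpa using h
  exact (by norm_num : (2 : F) ≠ 0) (MvPolynomial.C_injective _ _ hC)

lemma key [CharZero F] :
    ∑ i : Fin m, pderiv i (cg F m g i.succ) = - (m • cg F m g 0) := by
  have hstep : ∀ i : Fin m, pderiv i (cg F m g i.succ)
      = ∑ k : Fin m, ∑ q, pderiv i (rv F m (g k) q) *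
          ((gmat F m g (Pi.single i.succ 1)).updateRow k.castSucc (Pi.single q 1)).det := by
    intro i
    rw [cg, pderiv_det_row, Fin.sum_univ_castSucc]
    have hlast : ((gmat F m g (Pi.single i.succ 1)).updateRow (Fin.last m)
        fun j => pderiv i (gmat F m g (Pi.single i.succ 1) (Fin.last m) j)).det = 0 := by
      refine det_eq_zero_of_row_eq_zero (Fin.last m) fun j => ?_
      rw [Matrix.updateRow_self]
      simp only [gmat_row_last]
      rcases eq_or_ne j i.succ with rfl | hj
      · rw [Pi.single_eq_same, pderiv_one]
      · rw [Pi.single_eq_of_ne hj, map_zero]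
    rw [hlast, add_zero]
    refine Finset.sum_congr rfl fun k _ => ?_
    simp only [gmat_row_castSucc]
    rw [det_updateRow_expand]
  calc ∑ i : Fin m, pderiv i (cg F m g i.succ)
      = ∑ i : Fin m, ∑ k : Fin m, ∑ q, pderiv i (rv F m (g k) q) *
          ((gmat F m g (Pi.single i.succ 1)).updateRow k.castSucc (Pi.single q 1)).det :=
        Finset.sum_congr rfl fun i _ => hstep i
    _ = ∑ k : Fin m, ∑ i : Fin m, ∑ q, pderiv i (rv F m (g k) q) *
          ((gmat F m g (Pi.single i.succ 1)).updateRow k.castSucc (Pi.single q 1)).det :=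
        Finset.sum_comm
    _ = ∑ _k : Fin m, (- cg F m g 0) := ?_
    _ = - (m • cg F m g 0) := by
        rw [Finset.sum_const, Finset.card_univ, Fintype.card_fin, smul_neg]
  refine Finset.sum_congr rfl fun k _ => ?_
  simp only [Fin.sum_univ_succ, rv_zero, rv_succ]
  rw [Finset.sum_add_distrib]
  have hz : ∑ i : Fin m, ∑ j : Fin m, pderiv i (pderiv j (g k)) *
      ((gmat F m g (Pi.single i.succ 1)).updateRow k.castSucc (Pi.single j.succ 1)).det = 0 := by
    refine sum_symm_antisymm_eq_zero (two_ne_zero'' F m) _ _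
      (fun p q => pderiv_pderiv_comm p q (g k)) (fun p q => ?_)
    exact psi_antisymm F m g k (Pi.single q.succ 1) (Pi.single p.succ 1)
  rw [hz, add_zero]
  have hrw : ∀ i : Fin m,
      ((gmat F m g (Pi.single i.succ 1)).updateRow k.castSucc (Pi.single (0 : Fin (m+1)) 1)).det
      = - ((gmat F m g (Pi.single (0 : Fin (m+1)) 1)).updateRow k.castSucc
            (Pi.single i.succ 1)).det :=
    fun i => psi_antisymm F m g k (Pi.single 0 1) (Pi.single i.succ 1)
  simp only [hrw, mul_neg]
  rw [Finset.sum_neg_distrib, neg_inj]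
  have hN : (gmat F m g (Pi.single (0 : Fin (m+1)) 1)).updateRow k.castSucc (rv F m (g k))
      = gmat F m g (Pi.single 0 1) := by
    conv_lhs => rw [← gmat_row_castSucc F m g (Pi.single 0 1) k]
    exact Matrix.updateRow_eq_self _ _
  have hexp := det_updateRow_expand
    (gmat F m g (Pi.single (0 : Fin (m+1)) 1)) k.castSucc (rv F m (g k))
  rw [hN, Fin.sum_univ_succ, rv_zero] at hexp
  have h0 : ((gmat F m g (Pi.single (0 : Fin (m+1)) 1)).updateRow k.castSucc
      (Pi.single (0 : Fin (m+1)) 1)).det = 0 := by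
    refine Matrix.det_zero_of_row_eq (Fin.castSucc_lt_last k).ne ?_
    rw [Matrix.updateRow_self, Matrix.updateRow_ne (Fin.castSucc_lt_last k).ne', gmat_row_last]
  rw [h0, mul_zero, zero_add] at hexp
  simp only [rv_succ] at hexp
  rw [← hexp, cg]

@[simp] lemma matW_apply (f : Fin (m + 1) → MvPolynomial (Fin m) F) (k q : Fin (m + 1)) :
    matW F m f k q = rv F m (f k) q := rfl

lemma hvec_lemma [CharZero F] (h : MvPolynomial (Fin m) F) :
    rv F m (dOp F m g h)
      + dOp F m g h • (Pi.single 0 1 : Fin (m + 1) → MvPolynomial (Fin m) F)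
      = (fun p => ∑ q, rv F m (cg F m g q) p * rv F m h q)
        + (cg F m g 0 • rv F m h
          + fun p => ∑ i : Fin m, cg F m g i.succ * pderiv i (rv F m h p)) := by
  funext p
  simp only [Pi.add_apply, Pi.smul_apply, smul_eq_mul]
  induction p using Fin.cases with
  | zero =>
      simp only [rv_zero, Pi.single_eq_same, mul_one]
      have hd' : ∑ q, cg F m g q * rv F m h q = dOp F m g h := by
        rw [dOp_eq]
        exact Finset.sum_congr rfl fun q _ => mul_comm _ _
      have hd'' : cg F m g 0 * h + ∑ i : Fin m, cg F m g i.succ * pderiv i h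
          = dOp F m g h := by
        rw [dOp_eq, Fin.sum_univ_succ, rv_zero]
        simp only [rv_succ]
        congr 1
        · ring
        · exact Finset.sum_congr rfl fun i _ => mul_comm _ _
      rw [hd', hd'']
  | succ j =>
      simp only [rv_succ, Pi.single_eq_of_ne (Fin.succ_ne_zero j), mul_zero, add_zero]
      rw [dOp_eq, map_sum]
      simp only [pderiv_mul]
      rw [Finset.sum_add_distrib, Fin.sum_univ_succ, Fin.sum_univ_succ, Fin.sum_univ_succ]
      simp only [rv_zero, rv_succ]
      have e1 : ∑ i : Fin m, pderiv j (pderiv i h) * cg F m g i.succ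
          = ∑ i : Fin m, cg F m g i.succ * pderiv i (pderiv j h) :=
        Finset.sum_congr rfl fun i _ => by rw [pderiv_pderiv_comm j i h]; exact mul_comm _ _
      have e2 : ∑ i : Fin m, pderiv i h * pderiv j (cg F m g i.succ)
          = ∑ i : Fin m, pderiv j (cg F m g i.succ) * pderiv i h :=
        Finset.sum_congr rfl fun i _ => mul_comm _ _
      rw [e1, e2]
      ring

lemma main [CharZero F] (f : Fin (m + 1) → MvPolynomial (Fin m) F) :
    wBracket F (m + 1) (snocFam g (wBracket F (m + 1) f)) =
      ∑ k : Fin (m + 1),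
        wBracket F (m + 1) (Function.update f k (wBracket F (m + 1) (snocFam g (f k)))) := by
  have hLHS : wBracket F (m + 1) (snocFam g (wBracket F (m + 1) f))
      = cg F m g 0 * (matW F m f).det
        + ∑ i : Fin m, cg F m g i.succ * pderiv i (matW F m f).det := by
    rw [wBracket_snoc, wBracket_eq, dOp_eq, Fin.sum_univ_succ, rv_zero]
    simp only [rv_succ]
    congr 1
    · ring
    · exact Finset.sum_congr rfl fun i _ => mul_comm _ _
  have hRHSk : ∀ k, wBracket F (m + 1)
        (Function.update f k (wBracket F (m + 1) (snocFam g (f k))))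
      = ((matW F m f).updateRow k (rv F m (dOp F m g (f k)))).det := by
    intro k
    rw [wBracket_snoc, wBracket_eq, matW_update]
  have hS_single : ∑ k, ((matW F m f).updateRow k
        (dOp F m g (f k) • (Pi.single 0 1 : Fin (m + 1) → MvPolynomial (Fin m) F))).det
      = cg F m g 0 * (matW F m f).det := by
    have h1 : ∀ k, ((matW F m f).updateRow k
          (dOp F m g (f k) • (Pi.single 0 1 : Fin (m + 1) → MvPolynomial (Fin m) F))).det
        = ∑ q, cg F m g q * (matW F m f k q *
            ((matW F m f).updateRow k
              ((Pi.single 0 1 : Fin (m + 1) → MvPolynomial (Fin m) F))).det) := by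
      intro k
      rw [Matrix.det_updateRow_smul, dOp_eq, Finset.sum_mul]
      exact Finset.sum_congr rfl fun q _ => by simp only [matW_apply]; ring
    simp only [h1]
    rw [Finset.sum_comm]
    have h2 : ∀ q, ∑ k, cg F m g q * (matW F m f k q *
          ((matW F m f).updateRow k
            ((Pi.single 0 1 : Fin (m + 1) → MvPolynomial (Fin m) F))).det)
        = cg F m g q * (if (0 : Fin (m + 1)) = q then (matW F m f).det else 0) := by
      intro q
      rw [← Finset.mul_sum, sum_mul_det_updateRow_single]
    simp only [h2]
    simp [mul_ite, mul_zero, Finset.sum_ite_eq]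
  have hS_A : ∑ k, ((matW F m f).updateRow k
        (fun p => ∑ q, rv F m (cg F m g q) p * rv F m (f k) q)).det
      = (∑ p, rv F m (cg F m g p) p) * (matW F m f).det := by
    have h1 : ∀ k, ((matW F m f).updateRow k
          (fun p => ∑ q, rv F m (cg F m g q) p * rv F m (f k) q)).det
        = ∑ p, ∑ q, rv F m (cg F m g q) p * (matW F m f k q *
            ((matW F m f).updateRow k ((Pi.single p 1 : Fin (m + 1) → MvPolynomial (Fin m) F))).det) := by
      intro k
      rw [det_updateRow_expand]
      refine Finset.sum_congr rfl fun p _ => ?_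
      rw [Finset.sum_mul]
      exact Finset.sum_congr rfl fun q _ => by simp only [matW_apply]; ring
    simp only [h1]
    rw [Finset.sum_comm, Finset.sum_mul]
    refine Finset.sum_congr rfl fun p _ => ?_
    rw [Finset.sum_comm]
    have h2 : ∀ q, ∑ k, rv F m (cg F m g q) p * (matW F m f k q *
          ((matW F m f).updateRow k ((Pi.single p 1 : Fin (m + 1) → MvPolynomial (Fin m) F))).det)
        = rv F m (cg F m g q) p * (if p = q then (matW F m f).det else 0) := by
      intro q
      rw [← Finset.mul_sum, sum_mul_det_updateRow_single]
    simp only [h2]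
    simp [mul_ite, mul_zero, Finset.sum_ite_eq]
  have hS_c0 : ∑ k, ((matW F m f).updateRow k (cg F m g 0 • rv F m (f k))).det
      = (m + 1) • (cg F m g 0 * (matW F m f).det) := by
    have h1 : ∀ k, ((matW F m f).updateRow k (cg F m g 0 • rv F m (f k))).det
        = cg F m g 0 * (matW F m f).det := by
      intro k
      rw [Matrix.det_updateRow_smul]
      have hself : (matW F m f).updateRow k (rv F m (f k)) = matW F m f :=
        Matrix.updateRow_eq_self _ _
      rw [hself]
    simp only [h1]
    rw [Finset.sum_const, Finset.card_univ, Fintype.card_fin]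
  have hS_T : ∑ k, ((matW F m f).updateRow k
        (fun p => ∑ i : Fin m, cg F m g i.succ * pderiv i (rv F m (f k) p))).det
      = ∑ i : Fin m, cg F m g i.succ * pderiv i (matW F m f).det := by
    have h1 : ∀ k : Fin (m + 1), (fun p => ∑ i : Fin m, cg F m g i.succ *
          pderiv i (rv F m (f k) p))
        = ∑ i : Fin m, cg F m g i.succ •
            ((fun p => pderiv i (matW F m f k p)) : Fin (m + 1) → MvPolynomial (Fin m) F) := by
      intro k
      funext p
      simp [Finset.sum_apply]
    simp only [h1]
    have h2 : ∀ k : Fin (m + 1), ((matW F m f).updateRow k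
          (∑ i : Fin m, cg F m g i.succ •
            ((fun p => pderiv i (matW F m f k p)) : Fin (m + 1) → MvPolynomial (Fin m) F))).det
        = ∑ i : Fin m, cg F m g i.succ *
            ((matW F m f).updateRow k (fun p => pderiv i (matW F m f k p))).det := by
      intro k
      rw [det_updateRow_finset_sum]
      exact Finset.sum_congr rfl fun i _ => by rw [Matrix.det_updateRow_smul]
    simp only [h2]
    rw [Finset.sum_comm]
    exact Finset.sum_congr rfl fun i _ => by rw [← Finset.mul_sum, ← pderiv_det_row]
  have hdets : ∀ k, ((matW F m f).updateRow k (rv F m (dOp F m g (f k)))).det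
      + ((matW F m f).updateRow k
          (dOp F m g (f k) • (Pi.single 0 1 : Fin (m + 1) → MvPolynomial (Fin m) F))).det
      = ((matW F m f).updateRow k
          (fun p => ∑ q, rv F m (cg F m g q) p * rv F m (f k) q)).det
        + (((matW F m f).updateRow k (cg F m g 0 • rv F m (f k))).det
          + ((matW F m f).updateRow k
              (fun p => ∑ i : Fin m, cg F m g i.succ *
                pderiv i (rv F m (f k) p))).det) := by
    intro k
    rw [← Matrix.det_updateRow_add, ← Matrix.det_updateRow_add, ← Matrix.det_updateRow_add,
      hvec_lemma F m g (f k)]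
  have hcomb : (∑ k, ((matW F m f).updateRow k (rv F m (dOp F m g (f k)))).det)
      + cg F m g 0 * (matW F m f).det
      = (∑ p, rv F m (cg F m g p) p) * (matW F m f).det
        + ((m + 1) • (cg F m g 0 * (matW F m f).det)
          + ∑ i : Fin m, cg F m g i.succ * pderiv i (matW F m f).det) := by
    rw [← hS_A, ← hS_c0, ← hS_T, ← hS_single, ← Finset.sum_add_distrib,
      ← Finset.sum_add_distrib, ← Finset.sum_add_distrib]
    exact Finset.sum_congr rfl fun k _ => hdets k
  have hp : ∑ p, rv F m (cg F m g p) p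
      = cg F m g 0 + ∑ i : Fin m, pderiv i (cg F m g i.succ) := by
    rw [Fin.sum_univ_succ, rv_zero]
    exact congrArg _ (Finset.sum_congr rfl fun i _ => by rw [rv_succ])
  rw [hLHS, Finset.sum_congr rfl fun k _ => hRHSk k]
  rw [hp, key F m g] at hcomb
  rw [nsmul_eq_mul, nsmul_eq_mul] at hcomb
  push_cast at hcomb
  linear_combination -hcomb

end w
end WBAux

/-- The bracket of `W^n` on the polynomial ring `F[x_1,…,x_{n-1}]`
(`char F = 0`, `n ≥ 2`) satisfies the Filippov–Jacobi identity. -/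
theorem wBracket_filippov (F : Type*) [Field F] [CharZero F] (n : ℕ) (hn : 2 ≤ n)
    (g : Fin (n - 1) → MvPolynomial (Fin (n - 1)) F)
    (f : Fin n → MvPolynomial (Fin (n - 1)) F) :
    wBracket F n (snocFam g (wBracket F n f)) =
      ∑ k : Fin n,
        wBracket F n (Function.update f k (wBracket F n (snocFam g (f k)))) := by
  obtain ⟨m, rfl⟩ : ∃ m, n = m + 1 := ⟨n - 1, by omega⟩
  exact WBAux.main F m g f
end

section
/- Let n ≥ 2 and let F be a field of characteristic 0. On V = F^{n+1} define the generalized vector product: for v_1,…,v_n ∈ V, [v_1,…,v_n] is the vector whose k-th coordinate (k ∈ Fin (n+1)) equals (−1)^{k+1} times the determinant of the n×n matrix obtained from the (n+1)×n matrix whose j-th column is v_j by deleting row k. Then this n-ary bracket satisfies the Filippov–Jacobi identity: [a_1,…,a_{n-1},[b_1,…,b_n]] = Σ_{k=1}^n [b_1,…,b_{k-1},[a_1,…,a_{n-1},b_k],b_{k+1},…,b_n] for all a_i, b_j ∈ V. (This is the (n+1)-dimensional vector product n-Lie algebra.) -/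
/-- The generalized vector product of `n` vectors in `F^{n+1}`: the `k`-th coordinate is
`(-1)^{k+1}` times the `k`-th `n×n` minor of the `(n+1)×n` matrix whose columns are the
given vectors. -/
def vecProd (F : Type*) [Field F] (n : ℕ)
    (v : Fin n → (Fin (n + 1) → F)) : Fin (n + 1) → F :=
  fun k => (-1 : F) ^ ((k : ℕ) + 1) *
    Matrix.det (Matrix.of fun (i : Fin n) (j : Fin n) => v j (Fin.succAbove k i))

section Aux
open Matrix
variable {F : Type*} [Field F] {n : ℕ}

def colMat (c : Fin n → Fin (n + 1) → F) (w : Fin (n + 1) → F) :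
    Matrix (Fin (n + 1)) (Fin (n + 1)) F :=
  Matrix.of fun i j => (Fin.snoc c w : Fin (n + 1) → Fin (n + 1) → F) j i

lemma pair_vecProd (c : Fin n → Fin (n + 1) → F) (w : Fin (n + 1) → F) :
    ∑ i, vecProd F n c i * w i = (-1 : F) ^ (n + 1) * (colMat c w).det := by
  rw [Matrix.det_succ_column (colMat c w) (Fin.last n), Finset.mul_sum]
  refine Finset.sum_congr rfl fun i _ => ?_
  have h2 : (colMat c w).submatrix i.succAbove (Fin.last n).succAbove
      = Matrix.of fun (p : Fin n) (q : Fin n) => c q (i.succAbove p) := by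
    ext p q
    simp [colMat, Fin.succAbove_last]
  have h1 : colMat c w i (Fin.last n) = w i := by simp [colMat]
  rw [h2, h1, Fin.val_last]
  have hs : (-1 : F) ^ (n + 1) * (-1 : F) ^ ((i : ℕ) + n) = (-1 : F) ^ ((i : ℕ) + 1) := by
    rw [← pow_add]
    have h : n + 1 + ((i : ℕ) + n) = (i : ℕ) + 1 + 2 * n := by ring
    rw [h, pow_add, pow_mul]
    norm_num
  simp only [vecProd, ← mul_assoc, hs]
  ring

lemma coord (u : Fin (n + 1) → F) (j : Fin (n + 1)) :
    ∑ i, u i * (Pi.single j 1 : Fin (n + 1) → F) i = u j := by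
  simp [Pi.single_apply]

omit [Field F] in
lemma colMat_update (b : Fin n → Fin (n + 1) → F) (w v : Fin (n + 1) → F) (k : Fin n) :
    colMat (Function.update b k v) w = (colMat b w).updateCol (Fin.castSucc k) v := by
  ext i j
  show (Fin.snoc (Function.update b k v) w : Fin (n + 1) → Fin (n + 1) → F) j i = _
  rw [Fin.snoc_update]
  rcases eq_or_ne j (Fin.castSucc k) with rfl | h
  · rw [Matrix.updateCol_self, Function.update_self]
  · rw [Matrix.updateCol_ne h, Function.update_of_ne h]
    rfl

lemma sum_det_updateColumn (A N : Matrix (Fin (n + 1)) (Fin (n + 1)) F) :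
    ∑ j, (A.updateCol j (N *ᵥ (fun i => A i j))).det = N.trace * A.det := by
  have h1 : ∀ (j : Fin (n + 1)) (v : Fin (n + 1) → F),
      (A.updateCol j v).det = ∑ i, A.adjugate j i * v i := by
    intro j v
    rw [← Matrix.cramer_apply, Matrix.cramer_eq_adjugate_mulVec]
    simp [Matrix.mulVec, dotProduct]
  calc ∑ j, (A.updateCol j (N *ᵥ (fun i => A i j))).det
      = ∑ j, ∑ i, A.adjugate j i * (N * A) i j := by
        refine Finset.sum_congr rfl fun j _ => ?_
        rw [h1]
        refine Finset.sum_congr rfl fun i _ => ?_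
        rw [Matrix.mul_apply]
        rfl
    _ = (A.adjugate * (N * A)).trace := by
        rw [Matrix.trace]
        exact Finset.sum_congr rfl fun j _ => by rw [Matrix.diag_apply, Matrix.mul_apply]
    _ = (N * (A * A.adjugate)).trace := by
        rw [Matrix.trace_mul_comm, Matrix.mul_assoc]
    _ = N.trace * A.det := by
        rw [Matrix.mul_adjugate, Matrix.mul_smul, mul_one, Matrix.trace_smul,
          smul_eq_mul, mul_comm]



lemma vecProd_snocFam_linear (hn : 2 ≤ n) (a : Fin (n - 1) → Fin (n + 1) → F)
    (x : Fin (n + 1) → F) :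
    vecProd F n (snocFam a x) =
      (Matrix.of fun i j => vecProd F n (snocFam a ((Pi.single j 1 : Fin (n + 1) → F))) i) *ᵥ x := by
  funext k
  have hj0 : n - 1 < n := by omega
  set j0 : Fin n := ⟨n - 1, hj0⟩ with hj0d
  set B : Matrix (Fin n) (Fin n) F :=
    Matrix.of fun (p : Fin n) (q : Fin n) => snocFam a x q (k.succAbove p) with hB
  have key : ∀ y : Fin (n + 1) → F,
      (Matrix.of fun (p : Fin n) (q : Fin n) => snocFam a y q (k.succAbove p))
        = B.updateCol j0 (fun p => y (k.succAbove p)) := by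
    intro y
    ext p q
    rcases lt_or_ge (q : ℕ) (n - 1) with h | h
    · have hq : q ≠ j0 := Fin.ne_of_val_ne (by simp only [hj0d]; omega)
      rw [Matrix.updateCol_ne hq]
      simp [hB, snocFam, h]
    · have hq : q = j0 := Fin.ext (by have := q.isLt; simp [hj0d]; omega)
      subst hq
      rw [Matrix.updateCol_self]
      simp [snocFam, hj0d]
  have hx : (fun p => x (k.succAbove p))
      = ∑ j : Fin (n + 1), x j • (fun p => (Pi.single j 1 : Fin (n + 1) → F) (k.succAbove p)) := by
    funext p
    simp only [Finset.sum_apply, Pi.smul_apply, smul_eq_mul, Pi.single_apply]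
    simp
  have expand : B.det = ∑ j, x j *
      (Matrix.of fun (p : Fin n) (q : Fin n) =>
        snocFam a ((Pi.single j 1 : Fin (n + 1) → F)) q (k.succAbove p)).det := by
    have hBdet : B.det = Matrix.cramer B (fun p => x (k.succAbove p)) j0 := by
      rw [Matrix.cramer_apply, ← key x]
    rw [hBdet, hx, map_sum, Finset.sum_apply]
    refine Finset.sum_congr rfl fun j _ => ?_
    rw [LinearMap.map_smul, Pi.smul_apply, smul_eq_mul]
    congr 1
    rw [Matrix.cramer_apply, ← key]
  show (-1 : F) ^ ((k : ℕ) + 1) * B.det = _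
  rw [expand, Finset.mul_sum]
  simp only [Matrix.mulVec, dotProduct, Matrix.of_apply, vecProd]
  exact Finset.sum_congr rfl fun j _ => by ring

lemma trace_N_zero (hn : 2 ≤ n) (a : Fin (n - 1) → Fin (n + 1) → F) :
    (Matrix.of fun i j =>
      vecProd F n (snocFam a ((Pi.single j 1 : Fin (n + 1) → F))) i).trace = 0 := by
  rw [Matrix.trace]
  refine Finset.sum_eq_zero fun k _ => ?_
  rw [Matrix.diag_apply, Matrix.of_apply, vecProd]
  rw [Matrix.det_eq_zero_of_column_eq_zero (⟨n - 1, by omega⟩ : Fin n) ?_, mul_zero]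
  intro p
  simp [snocFam, Pi.single_eq_of_ne (Fin.succAbove_ne k p)]


lemma det_colMat_swap (hn : 2 ≤ n) (a : Fin (n - 1) → Fin (n + 1) → F)
    (x y : Fin (n + 1) → F) :
    (colMat (snocFam a x) y).det = -(colMat (snocFam a y) x).det := by
  have hj0 : n - 1 < n := by omega
  set p1 : Fin (n + 1) := Fin.castSucc ⟨n - 1, hj0⟩ with hp1
  have hne : p1 ≠ Fin.last n := by
    apply Fin.ne_of_val_ne
    simp [hp1]
    omega
  have hM : colMat (snocFam a x) y
      = (colMat (snocFam a y) x).submatrix id (Equiv.swap p1 (Fin.last n)) := by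
    ext i j
    simp only [Matrix.submatrix_apply, id_eq, colMat, Matrix.of_apply]
    rcases eq_or_ne j (Fin.last n) with rfl | hj2
    · rw [Equiv.swap_apply_right, hp1, Fin.snoc_last, Fin.snoc_castSucc]
      simp [snocFam]
    rcases eq_or_ne j p1 with rfl | hj1
    · rw [Equiv.swap_apply_left, hp1, Fin.snoc_last, Fin.snoc_castSucc]
      simp [snocFam]
    · rw [Equiv.swap_apply_of_ne_of_ne hj1 hj2]
      obtain ⟨q, rfl⟩ := Fin.exists_castSucc_eq.mpr hj2
      rw [Fin.snoc_castSucc, Fin.snoc_castSucc]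
      have hq : (q : ℕ) < n - 1 := by
        have h3 := q.isLt
        have h4 : (q : ℕ) ≠ n - 1 := by
          intro h
          exact hj1 (by simp only [hp1]; exact congrArg Fin.castSucc (Fin.ext h))
        omega
      simp [snocFam, hq]
  rw [hM, Matrix.det_permute', Equiv.Perm.sign_swap hne]
  simp

lemma main_det (hn : 2 ≤ n) (a : Fin (n - 1) → Fin (n + 1) → F)
    (b : Fin n → Fin (n + 1) → F) (w : Fin (n + 1) → F) :
    (colMat (snocFam a (vecProd F n b)) w).det
      = ∑ k : Fin n, (colMat (Function.update b k (vecProd F n (snocFam a (b k)))) w).det := by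
  set N : Matrix (Fin (n + 1)) (Fin (n + 1)) F :=
    Matrix.of fun i j => vecProd F n (snocFam a ((Pi.single j 1 : Fin (n + 1) → F))) i with hN
  set A := colMat b w with hA
  have hcol : ∀ k : Fin n, (fun i => A i (Fin.castSucc k)) = b k := by
    intro k; funext i; simp [hA, colMat]
  have hcoll : (fun i => A i (Fin.last n)) = w := by
    funext i; simp [hA, colMat]
  have hsum := sum_det_updateColumn A N
  rw [trace_N_zero hn a, zero_mul, Fin.sum_univ_castSucc] at hsum
  have h2 : ∑ k : Fin n,
      (colMat (Function.update b k (vecProd F n (snocFam a (b k)))) w).det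
      = -(A.updateCol (Fin.last n) (N *ᵥ w)).det := by
    have e1 : ∑ k : Fin n,
        (colMat (Function.update b k (vecProd F n (snocFam a (b k)))) w).det
        = ∑ k : Fin n, (A.updateCol (Fin.castSucc k) (N *ᵥ (fun i => A i (Fin.castSucc k)))).det := by
      refine Finset.sum_congr rfl fun k _ => ?_
      rw [colMat_update, vecProd_snocFam_linear hn, hcol k]
    rw [e1]
    rw [hcoll] at hsum
    exact eq_neg_of_add_eq_zero_left hsum
  have h3 : A.updateCol (Fin.last n) (N *ᵥ w)
      = colMat b (vecProd F n (snocFam a w)) := by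
    rw [← vecProd_snocFam_linear hn]
    ext i j
    rcases eq_or_ne j (Fin.last n) with rfl | hj
    · rw [Matrix.updateCol_self]
      simp [colMat]
    · rw [Matrix.updateCol_ne hj]
      obtain ⟨q, rfl⟩ := Fin.exists_castSucc_eq.mpr hj
      simp [hA, colMat]
  have h4 := det_colMat_swap hn a (vecProd F n b) w
  have h5 : (colMat (snocFam a w) (vecProd F n b)).det
      = (colMat b (vecProd F n (snocFam a w))).det := by
    have e1 := pair_vecProd (snocFam a w) (vecProd F n b)
    have e2 := pair_vecProd b (vecProd F n (snocFam a w))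
    have heq : ∑ i, vecProd F n (snocFam a w) i * vecProd F n b i
        = ∑ i, vecProd F n b i * vecProd F n (snocFam a w) i :=
      Finset.sum_congr rfl fun i _ => mul_comm _ _
    have hpow : ((-1 : F) ^ (n + 1)) ≠ 0 := pow_ne_zero _ (by norm_num)
    exact mul_left_cancel₀ hpow (by rw [← e1, ← e2, heq])
  rw [h4, h5, ← h3, h2]

end Aux

/-- The generalized vector product on `F^{n+1}` (`char F = 0`, `n ≥ 2`) satisfies the
Filippov–Jacobi identity: it is the `(n+1)`-dimensional vector product `n`-Lie algebra. -/
theorem vecProd_filippov (F : Type*) [Field F] [CharZero F] (n : ℕ) (hn : 2 ≤ n)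
    (a : Fin (n - 1) → (Fin (n + 1) → F)) (b : Fin n → (Fin (n + 1) → F)) :
    vecProd F n (snocFam a (vecProd F n b)) =
      ∑ k : Fin n,
        vecProd F n (Function.update b k (vecProd F n (snocFam a (b k)))) := by
  funext j
  rw [Finset.sum_apply]
  have hc : ∀ u : Fin n → (Fin (n + 1) → F),
      vecProd F n u j = (-1 : F) ^ (n + 1) * (colMat u ((Pi.single j 1 : Fin (n + 1) → F))).det := by
    intro u
    rw [← coord (vecProd F n u) j, pair_vecProd]
  simp only [hc]
  rw [main_det hn a b, Finset.mul_sum]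
end

section
/- Let (V,B) be an n-Lie algebra over a field F of characteristic 0 with n ≥ 2, and let M be an n-Lie module over V, i.e. the direct sum V ⊕ M carries an alternating n-multilinear bracket B' satisfying the Filippov–Jacobi identity such that B' restricts to B on V, B'(a_1,…,a_{n-1},m) ∈ M for a_i ∈ V and m ∈ M, and B' vanishes whenever at least two of its arguments lie in M. Define ρ(a_1∧⋯∧a_{n-1}) ∈ End_F(M) by ρ(a_1∧⋯∧a_{n-1})(m) = B'(a_1,…,a_{n-1},m). Then ρ extends to a well-defined F-linear map ρ : ⋀^{n-1}V → End_F(M) which is a homomorphism of Lie algebras: ρ([x,y]) = ρ(x)∘ρ(y) − ρ(y)∘ρ(x) for all x, y ∈ ⋀^{n-1}V, where [·,·] is the bracket on ⋀^{n-1}V determined by [a_1∧⋯∧a_{n-1}, b_1∧⋯∧b_{n-1}] = Σ_{i=1}^{n-1} b_1∧⋯∧D_{a_1,…,a_{n-1}}(b_i)∧⋯∧b_{n-1}. -/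
/-- The Filippov–Jacobi identity for an `n`-ary bracket. -/
def IsFilippov {F V : Type*} [Field F] [AddCommGroup V] [Module F V] {n : ℕ}
    (B : (Fin n → V) → V) : Prop :=
  ∀ (a : Fin (n - 1) → V) (b : Fin n → V),
    B (snocFam a (B b)) = ∑ k : Fin n, B (Function.update b k (B (snocFam a (b k))))

/-- The decomposable element `a_1 ∧ ⋯ ∧ a_k` of the `k`-th exterior power `⋀^k V`. -/
noncomputable def wedge (F : Type*) [Field F] {V : Type*} [AddCommGroup V] [Module F V]
    (k : ℕ) (a : Fin k → V) : ⋀[F]^k V :=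
  ⟨ExteriorAlgebra.ιMulti F k a, ExteriorAlgebra.ιMulti_range F k (Set.mem_range_self a)⟩

section Aux

set_option linter.unusedSectionVars false

variable {α : Type*} {p : ℕ}

lemma snocFam_castSucc (g : Fin p → α) (x : α) (j : Fin p) :
    snocFam (n := p+1) g x j.castSucc = g j := by
  simp [snocFam, j.isLt]

lemma snocFam_last (g : Fin p → α) (x : α) :
    snocFam (n := p+1) g x (Fin.last p) = x := by
  simp [snocFam]

lemma update_snocFam_last (g : Fin p → α) (x y : α) :
    Function.update (snocFam (n := p+1) g x) (Fin.last p) y = snocFam (n := p+1) g y := by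
  funext i
  rcases eq_or_ne i (Fin.last p) with rfl | h
  · simp [snocFam_last]
  · have hi : (i : ℕ) < p + 1 - 1 := by
      have h1 := i.isLt
      have h2 : (i : ℕ) ≠ p := fun hh => h (Fin.ext hh)
      omega
    rw [Function.update_of_ne h]
    simp only [snocFam, dif_pos hi]

lemma snocFam_update (g : Fin p → α) (x : α) (j : Fin p) (v : α) :
    snocFam (n := p+1) (Function.update g j v) x
      = Function.update (snocFam (n := p+1) g x) j.castSucc v := by
  funext i
  rcases eq_or_ne i j.castSucc with rfl | h
  · simp [snocFam_castSucc]
  · rw [Function.update_of_ne h]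
    by_cases hi : (i : ℕ) < p + 1 - 1
    · have hne : (⟨(i : ℕ), hi⟩ : Fin (p + 1 - 1)) ≠ j := by
        intro hh
        exact h (Fin.ext (by simpa using congrArg Fin.val hh))
      simp only [snocFam, dif_pos hi]
      rw [Function.update_of_ne hne]
    · simp only [snocFam, dif_neg hi]

variable {F : Type*} [Field F] {V M : Type*} [AddCommGroup V] [Module F V]
  [AddCommGroup M] [Module F M]

lemma pair_update (a : Fin p → V) (j : Fin p) (v : V) :
    (fun i : Fin p => ((Function.update a j v) i, (0 : M)))
      = Function.update (fun i : Fin p => (a i, (0 : M))) j (v, (0 : M)) := by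
  funext i
  rcases eq_or_ne i j with rfl | h
  · simp
  · rw [Function.update_of_ne h, Function.update_of_ne h]

lemma pair_snocFam (g : Fin p → V) (x : V) :
    snocFam (n := p+1) (fun i : Fin p => ((g i : V), (0 : M))) (x, (0 : M))
      = fun i => (snocFam (n := p+1) g x i, (0 : M)) := by
  funext i
  simp only [snocFam]
  split <;> rfl

/-- The action map `a ↦ (m ↦ (B' (a₁,…,a_p,m)).2)` as an alternating map. -/
noncomputable def actA (B' : (V × M) [⋀^Fin (p+1)]→ₗ[F] (V × M)) :
    V [⋀^Fin p]→ₗ[F] Module.End F M where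
  toFun a :=
    { toFun := fun m =>
        (B' (snocFam (n := p+1) (fun i : Fin p => ((a i : V), (0 : M))) ((0 : V), m))).2
      map_add' := fun m m' => by
        show (B' (snocFam (n := p+1) (fun i : Fin p => ((a i : V), (0 : M))) ((0 : V), m + m'))).2
          = (B' (snocFam (n := p+1) (fun i : Fin p => ((a i : V), (0 : M))) ((0 : V), m))).2
            + (B' (snocFam (n := p+1) (fun i : Fin p => ((a i : V), (0 : M))) ((0 : V), m'))).2
        have h1 : ∀ m : M,
            snocFam (n := p+1) (fun i : Fin p => ((a i : V), (0 : M))) ((0 : V), m)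
              = Function.update
                  (snocFam (n := p+1) (fun i : Fin p => ((a i : V), (0 : M))) ((0 : V), (0 : M)))
                  (Fin.last p) ((0 : V), m) :=
          fun m => (update_snocFam_last _ _ _).symm
        rw [h1 (m + m'), h1 m, h1 m']
        have h2 : ((0 : V), m + m') = ((0 : V), m) + ((0 : V), m') := by simp
        rw [h2, AlternatingMap.map_update_add]
        simp
      map_smul' := fun c m => by
        show (B' (snocFam (n := p+1) (fun i : Fin p => ((a i : V), (0 : M))) ((0 : V), c • m))).2
          = c • (B' (snocFam (n := p+1) (fun i : Fin p => ((a i : V), (0 : M))) ((0 : V), m))).2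
        have h1 : ∀ m : M,
            snocFam (n := p+1) (fun i : Fin p => ((a i : V), (0 : M))) ((0 : V), m)
              = Function.update
                  (snocFam (n := p+1) (fun i : Fin p => ((a i : V), (0 : M))) ((0 : V), (0 : M)))
                  (Fin.last p) ((0 : V), m) :=
          fun m => (update_snocFam_last _ _ _).symm
        rw [h1 (c • m), h1 m]
        have h2 : ((0 : V), c • m) = c • ((0 : V), m) := by simp
        rw [h2, AlternatingMap.map_update_smul]
        simp }
  map_update_add' := by
    intro inst a j x y
    have hinst : inst = instDecidableEqFin p := Subsingleton.elim _ _
    subst hinst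
    ext m
    show (B' (snocFam (n := p+1)
        (fun i : Fin p => ((Function.update a j (x + y)) i, (0 : M))) ((0 : V), m))).2 = _
    rw [pair_update, snocFam_update]
    have h2 : ((x + y : V), (0 : M)) = ((x : V), (0 : M)) + ((y : V), (0 : M)) := by simp
    rw [h2, AlternatingMap.map_update_add]
    simp only [Prod.snd_add]
    congr 1 <;>
      · show _ = (B' (snocFam (n := p+1)
          (fun i : Fin p => ((Function.update a j _) i, (0 : M))) ((0 : V), m))).2
        rw [pair_update, snocFam_update]
  map_update_smul' := by
    intro inst a j c x
    have hinst : inst = instDecidableEqFin p := Subsingleton.elim _ _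
    subst hinst
    ext m
    show (B' (snocFam (n := p+1)
        (fun i : Fin p => ((Function.update a j (c • x)) i, (0 : M))) ((0 : V), m))).2 = _
    rw [pair_update, snocFam_update]
    have h2 : ((c • x : V), (0 : M)) = c • ((x : V), (0 : M)) := by simp
    rw [h2, AlternatingMap.map_update_smul]
    simp only [Prod.smul_snd]
    congr 1
    show _ = (B' (snocFam (n := p+1)
        (fun i : Fin p => ((Function.update a j x) i, (0 : M))) ((0 : V), m))).2
    rw [pair_update, snocFam_update]
  map_eq_zero_of_eq' := by
    intro v i j hv hij
    ext m
    show (B' (snocFam (n := p+1) (fun i : Fin p => ((v i : V), (0 : M))) ((0 : V), m))).2 = 0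
    have h0 : B' (snocFam (n := p+1)
        (fun i : Fin p => ((v i : V), (0 : M))) ((0 : V), m)) = 0 := by
      apply B'.map_eq_zero_of_eq _ (i := i.castSucc) (j := j.castSucc)
      · rw [snocFam_castSucc, snocFam_castSucc, hv]
      · simpa using hij
    rw [h0]
    rfl

end Aux

/-- If `M` is an `n`-Lie module over the `n`-Lie algebra `(V, B)` — i.e. `V ⊕ M` carries an
alternating `n`-bracket `B'` satisfying the Filippov–Jacobi identity which restricts to `B`
on `V`, sends `(a_1,…,a_{n-1},m)` into `M`, and vanishes when two arguments lie in `M` —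
then `ρ(a_1∧⋯∧a_{n-1})(m) := B'(a_1,…,a_{n-1},m)` extends to a well-defined linear map
`ρ : ⋀^{n-1}V → End_F(M)` which is a Lie algebra homomorphism for the bracket `Br` on
`⋀^{n-1}V` induced by `B`. -/
theorem nLieModule_gives_lie_rep {F : Type*} [Field F] [CharZero F]
    {V : Type*} [AddCommGroup V] [Module F V] (n : ℕ) (hn : 2 ≤ n)
    (B : V [⋀^Fin n]→ₗ[F] V)
    (hB : IsFilippov (F := F) (fun v => B v))
    (M : Type*) [AddCommGroup M] [Module F M]
    (B' : (V × M) [⋀^Fin n]→ₗ[F] (V × M))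
    (hB'fil : IsFilippov (F := F) (fun v => B' v))
    (hrestr : ∀ a : Fin n → V, B' (fun i => (a i, (0 : M))) = (B a, 0))
    (hintoM : ∀ (a : Fin (n - 1) → V) (m : M),
      (B' (snocFam (fun i => ((a i : V), (0 : M))) ((0 : V), m))).1 = 0)
    (htwoM : ∀ c : Fin n → V × M, ∀ i j : Fin n,
      i ≠ j → (c i).1 = 0 → (c j).1 = 0 → B' c = 0)
    (Br : ⋀[F]^(n-1) V →ₗ[F] ⋀[F]^(n-1) V →ₗ[F] ⋀[F]^(n-1) V)
    (hBr : ∀ a b : Fin (n - 1) → V,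
      Br (wedge F (n-1) a) (wedge F (n-1) b) =
        ∑ i : Fin (n - 1), wedge F (n-1) (Function.update b i (B (snocFam a (b i))))) :
    ∃ ρ : ⋀[F]^(n-1) V →ₗ[F] Module.End F M,
      (∀ (a : Fin (n - 1) → V) (m : M),
        ρ (wedge F (n-1) a) m = (B' (snocFam (fun i => ((a i : V), (0 : M))) ((0 : V), m))).2) ∧
      (∀ x y : ⋀[F]^(n-1) V, ρ (Br x y) = ρ x * ρ y - ρ y * ρ x) := by
  obtain ⟨p, rfl⟩ : ∃ p, n = p + 1 := ⟨n - 1, by omega⟩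
  set A : V [⋀^Fin p]→ₗ[F] Module.End F M := actA B' with hA
  set fs : ∀ i : ℕ, V [⋀^Fin i]→ₗ[F] Module.End F M :=
    Function.update (fun _ => 0) p A with hfs
  set ρ : ⋀[F]^(p+1-1) V →ₗ[F] Module.End F M :=
    (ExteriorAlgebra.liftAlternating fs).comp (Submodule.subtype _) with hρ
  have hρw : ∀ a : Fin (p+1-1) → V, ρ (wedge F (p+1-1) a) = A a := by
    intro a
    show ExteriorAlgebra.liftAlternating fs (ExteriorAlgebra.ιMulti F p a) = A a
    rw [ExteriorAlgebra.liftAlternating_apply_ιMulti]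
    simp [hfs]
  -- the value of B' on a module-type family
  have hAval : ∀ (a : Fin p → V) (m : M),
      B' (snocFam (n := p+1) (fun i : Fin p => ((a i : V), (0 : M))) ((0 : V), m))
        = ((0 : V), A a m) := by
    intro a m
    exact Prod.ext (hintoM a m) rfl
  -- the key consequence of the Filippov identity
  have hcomm : ∀ (a b : Fin p → V) (m : M),
      A a (A b m)
        = (∑ k : Fin p, A (Function.update b k (B (snocFam (n := p+1) a (b k)))) m)
            + A b (A a m) := by
    intro a b m
    have hfil := hB'fil (fun i : Fin p => ((a i : V), (0 : M)))
      (snocFam (n := p+1) (fun i : Fin p => ((b i : V), (0 : M))) ((0 : V), m))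
    beta_reduce at hfil
    rw [hAval b m, hAval a (A b m), Fin.sum_univ_castSucc] at hfil
    have hterm : ∀ k : Fin p,
        B' (Function.update
            (snocFam (n := p+1) (fun i : Fin p => ((b i : V), (0 : M))) ((0 : V), m)) k.castSucc
            (B' (snocFam (n := p+1) (fun i : Fin p => ((a i : V), (0 : M)))
              (snocFam (n := p+1) (fun i : Fin p => ((b i : V), (0 : M)))
                ((0 : V), m) k.castSucc))))
          = ((0 : V), A (Function.update b k (B (snocFam (n := p+1) a (b k)))) m) := by
      intro k
      simp only [snocFam_castSucc]
      have h1 : B' (snocFam (n := p+1) (fun i : Fin p => ((a i : V), (0 : M)))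
            ((b k : V), (0 : M)))
          = ((B (snocFam (n := p+1) a (b k)) : V), (0 : M)) := by
        rw [pair_snocFam]
        exact hrestr (snocFam (n := p+1) a (b k))
      rw [h1]
      have h2 : Function.update
            (snocFam (n := p+1) (fun i : Fin p => ((b i : V), (0 : M))) ((0 : V), m)) k.castSucc
            ((B (snocFam (n := p+1) a (b k)) : V), (0 : M))
          = snocFam (n := p+1)
              (fun i : Fin p =>
                ((Function.update b k (B (snocFam (n := p+1) a (b k))) i : V), (0 : M)))
              ((0 : V), m) := by
        rw [pair_update, snocFam_update]
      rw [h2, hAval]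
    have hlast :
        B' (Function.update
            (snocFam (n := p+1) (fun i : Fin p => ((b i : V), (0 : M))) ((0 : V), m)) (Fin.last p)
            (B' (snocFam (n := p+1) (fun i : Fin p => ((a i : V), (0 : M)))
              (snocFam (n := p+1) (fun i : Fin p => ((b i : V), (0 : M)))
                ((0 : V), m) (Fin.last p)))))
          = ((0 : V), A b (A a m)) := by
      rw [snocFam_last, hAval a m, update_snocFam_last, hAval]
    rw [hlast] at hfil
    simp only [hterm] at hfil
    have h4 := congrArg Prod.snd hfil
    simpa [Prod.snd_sum] using h4
  refine ⟨ρ, ?_, ?_⟩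
  · intro a m
    rw [hρw a]
    rfl
  · -- span of decomposables is everything
    have hsp : Submodule.span F (Set.range (wedge F (p+1-1) (V := V))) = ⊤ := by
      apply Submodule.map_injective_of_injective
        (Submodule.injective_subtype (⋀[F]^(p+1-1) V))
      rw [Submodule.map_span, Submodule.map_top, Submodule.range_subtype, ← Set.range_comp]
      have hc : (⋀[F]^(p+1-1) V).subtype ∘ wedge F (p+1-1)
          = ExteriorAlgebra.ιMulti F (p+1-1) := rfl
      rw [hc, ExteriorAlgebra.ιMulti_span_fixedDegree]
    have Hmm : ∀ a b : Fin (p+1-1) → V,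
        ρ (Br (wedge F (p+1-1) a) (wedge F (p+1-1) b))
          = ρ (wedge F (p+1-1) a) * ρ (wedge F (p+1-1) b)
            - ρ (wedge F (p+1-1) b) * ρ (wedge F (p+1-1) a) := by
      intro a b
      rw [hBr a b, map_sum, hρw a, hρw b]
      simp only [hρw]
      ext m
      simp only [LinearMap.coe_sum, Finset.sum_apply, LinearMap.sub_apply, Module.End.mul_apply]
      have h3 : (∑ k : Fin p, A (Function.update b k (B (snocFam (n := p+1) a (b k)))) m)
          = A a (A b m) - A b (A a m) := by
        rw [hcomm a b m]; abel
      exact h3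
    have H1 : ∀ (a : Fin (p+1-1) → V) (y : ⋀[F]^(p+1-1) V),
        ρ (Br (wedge F (p+1-1) a) y)
          = ρ (wedge F (p+1-1) a) * ρ y - ρ y * ρ (wedge F (p+1-1) a) := by
      intro a y
      have hy : y ∈ Submodule.span F (Set.range (wedge F (p+1-1) (V := V))) := by
        rw [hsp]; trivial
      induction hy using Submodule.span_induction with
      | mem z hz =>
        obtain ⟨b, rfl⟩ := hz
        exact Hmm a b
      | zero => simp
      | add u v hu hv ihu ihv =>
        rw [map_add, map_add, ihu, ihv, map_add]
        simp only [mul_add, add_mul]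
        abel
      | smul c u hu ihu =>
        rw [map_smul, map_smul, ihu, map_smul]
        simp only [mul_smul_comm, smul_mul_assoc, smul_sub]
    intro x y
    have hx : x ∈ Submodule.span F (Set.range (wedge F (p+1-1) (V := V))) := by
      rw [hsp]; trivial
    induction hx using Submodule.span_induction with
    | mem z hz =>
      obtain ⟨a, rfl⟩ := hz
      exact H1 a y
    | zero => simp
    | add u v hu hv ihu ihv =>
      rw [map_add, LinearMap.add_apply, map_add, ihu, ihv, map_add]
      simp only [mul_add, add_mul]
      abel
    | smul c u hu ihu =>
      rw [map_smul, LinearMap.smul_apply, map_smul, ihu, map_smul]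
      simp only [mul_smul_comm, smul_mul_assoc, smul_sub]
end

section
/- Let (V,B) be an n-Lie algebra over a field F of characteristic 0 with n ≥ 2, let M be an F-vector space, and let ρ : ⋀^{n-1}V → End_F(M) be an F-linear map such that (i) ρ([x,y]) = ρ(x)∘ρ(y) − ρ(y)∘ρ(x) for all x,y ∈ ⋀^{n-1}V, where [·,·] is the bracket on ⋀^{n-1}V determined by [a_1∧⋯∧a_{n-1}, b_1∧⋯∧b_{n-1}] = Σ_{i=1}^{n-1} b_1∧⋯∧D_{a_1,…,a_{n-1}}(b_i)∧⋯∧b_{n-1}, and (ii) for all a_1,…,a_{2n-2} ∈ V, ρ(B(a_1,…,a_n)∧a_{n+1}∧⋯∧a_{2n-2}) = Σ_{i=1}^n (−1)^{i+n} ρ(a_1∧⋯∧â_i∧⋯∧a_n)∘ρ(a_i∧a_{n+1}∧⋯∧a_{2n-2}) (hat denotes omission). Then the n-ary bracket B' on V ⊕ M defined by: B' = B when all arguments lie in V; B'(a_1,…,a_{i-1}, m, a_{i+1},…,a_n) = (−1)^{n−i} ρ(a_1∧⋯∧â_i∧⋯∧a_n)(m) for a_j ∈ V, m ∈ M; and B'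 = 0 whenever at least two arguments lie in M; is an alternating n-multilinear map satisfying the Filippov–Jacobi identity. Thus M is an n-Lie module over V. -/
/-- The family `a_1, …, â_i, …, a_n` (omit the `i`-th entry), indexed by `Fin (n-1)`. -/
def omitFam {V : Type*} {n : ℕ} (hn : 2 ≤ n) (a : Fin n → V) (i : Fin n) :
    Fin (n - 1) → V :=
  fun k => a (Fin.cast (by omega : n - 1 + 1 = n)
    ((Fin.cast (by omega : n = n - 1 + 1) i).succAbove k))

/-- The family `x, c_1, …, c_{n-2}`, indexed by `Fin (n-1)`. -/
def consFam {V : Type*} {n : ℕ} (hn : 2 ≤ n) (x : V) (c : Fin (n - 2) → V) :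
    Fin (n - 1) → V :=
  Fin.cons x c ∘ Fin.cast (by omega : n - 1 = n - 2 + 1)


/-! ### Auxiliary lemmas -/

open Function

section AuxFin

lemma neg_one_pow_congr_mod2 {F : Type*} [Field F] {s t : ℕ} (h : s % 2 = t % 2) :
    (-1 : F) ^ s = (-1 : F) ^ t := by
  rcases Nat.even_or_odd s with hs | hs
  · have ht : Even t := Nat.even_iff.mpr (by rw [← h]; exact Nat.even_iff.mp hs)
    rw [hs.neg_one_pow, ht.neg_one_pow]
  · have ht : Odd t := Nat.odd_iff.mpr (by rw [← h]; exact Nat.odd_iff.mp hs)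
    rw [hs.neg_one_pow, ht.neg_one_pow]

lemma succAbove_succAbove_aux {q : ℕ} (i j : Fin (q + 2)) (hij : (i : ℕ) < (j : ℕ)) (t : Fin q) :
    i.succAbove ((⟨(j : ℕ) - 1, by omega⟩ : Fin (q + 1)).succAbove t) =
      j.succAbove ((⟨(i : ℕ), by omega⟩ : Fin (q + 1)).succAbove t) := by
  apply Fin.ext
  simp only [Fin.succAbove, Fin.lt_def, apply_ite Fin.val, Fin.coe_castSucc, Fin.val_succ]
  split_ifs <;> omega

lemma removeNth_update_ne {α : Type*} {N : ℕ} (k : Fin (N + 1)) (t : Fin N)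
    (u : Fin (N + 1) → α) (x : α) :
    k.removeNth (Function.update u (k.succAbove t) x) = Function.update (k.removeNth u) t x := by
  funext s
  rcases eq_or_ne s t with rfl | hs
  · simp [Fin.removeNth]
  · simp [Fin.removeNth, Function.update_of_ne hs,
      Function.update_of_ne ((Fin.succAbove_right_injective (p := k)).ne hs)]

lemma removeNth_castSucc_snoc {α : Type*} {q : ℕ} (i : Fin (q + 1)) (x : Fin (q + 1) → α)
    (w : α) :
    (i.castSucc).removeNth (Fin.snoc (α := fun _ => α) x w) =
      Fin.snoc (α := fun _ => α) (i.removeNth x) w := by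
  funext t
  refine Fin.lastCases ?_ ?_ t
  · show Fin.snoc (α := fun _ => α) x w ((i.castSucc).succAbove (Fin.last q)) =
      Fin.snoc (α := fun _ => α) (i.removeNth x) w (Fin.last q)
    have hh : (i.castSucc).succAbove (Fin.last q) = Fin.last (q + 1) := by
      apply Fin.ext
      simp only [Fin.succAbove, Fin.lt_def, apply_ite Fin.val, Fin.coe_castSucc, Fin.val_succ,
        Fin.val_last]
      try split_ifs <;> omega
    rw [hh]
    simp
  · intro s
    show Fin.snoc (α := fun _ => α) x w ((i.castSucc).succAbove s.castSucc) =
      Fin.snoc (α := fun _ => α) (i.removeNth x) w s.castSucc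
    have hh : (i.castSucc).succAbove s.castSucc = (i.succAbove s).castSucc := by
      apply Fin.ext
      simp only [Fin.succAbove, Fin.lt_def, apply_ite Fin.val, Fin.coe_castSucc, Fin.val_succ]
      try split_ifs <;> omega
    rw [hh]
    simp [Fin.removeNth]

end AuxFin

section AuxWedge

variable {F : Type*} [Field F] {V : Type*} [AddCommGroup V] [Module F V] {q : ℕ}

lemma snocFam_eq {α : Type*} (g : Fin (q + 1) → α) (x : α) :
    snocFam (n := q + 2) g x = Fin.snoc g x := by
  funext i
  simp only [snocFam, Fin.snoc, Fin.castLT]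
  rfl

lemma omitFam_eq (hn : 2 ≤ q + 2) (a : Fin (q + 2) → V) (i : Fin (q + 2)) :
    omitFam hn a i = i.removeNth a := by
  funext k
  rfl

lemma consFam_eq (hn : 2 ≤ q + 2) (x : V) (c : Fin q → V) :
    consFam hn x c = Fin.cons x c := by
  funext k
  rfl

lemma ιMulti_insertNth (i : Fin (q + 1)) (z : V) (v : Fin q → V) :
    ExteriorAlgebra.ιMulti F (q + 1) (i.insertNth z v) =
      ((-1 : F) ^ (i : ℕ)) • (ExteriorAlgebra.ι F z * ExteriorAlgebra.ιMulti F q v) := by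
  have hperm : i.insertNth z v = (Fin.cons z v) ∘ (Fin.cycleRange i) := by
    funext t
    refine Fin.succAboveCases i ?_ ?_ t
    · simp
    · intro s; simp [Fin.cycleRange_succAbove]
  have h2 : ExteriorAlgebra.ιMulti F (q + 1) (Fin.cons z v) =
      ExteriorAlgebra.ι F z * ExteriorAlgebra.ιMulti F q v := by
    rw [ExteriorAlgebra.ιMulti_succ_apply]
    simp [Matrix.vecTail, Function.comp_def]
  rw [hperm, AlternatingMap.map_perm, Fin.sign_cycleRange, h2]
  rcases Nat.even_or_odd (i : ℕ) with h | h
  · rw [h.neg_one_pow, h.neg_one_pow, one_smul, one_smul]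
  · rw [h.neg_one_pow, h.neg_one_pow]
    simp [Units.smul_def]

lemma wedge_snoc_flip (c : Fin q → V) (z : V) :
    wedge F (q + 1) (Fin.snoc c z) = ((-1 : F) ^ q) • wedge F (q + 1) (Fin.cons z c) := by
  apply Subtype.ext
  rw [SetLike.val_smul]
  show ExteriorAlgebra.ιMulti F (q+1) (Fin.snoc c z)
    = ((-1 : F) ^ q) • ExteriorAlgebra.ιMulti F (q+1) (Fin.cons z c)
  rw [← Fin.insertNth_last' z c, ← Fin.insertNth_zero' z c, ιMulti_insertNth, ιMulti_insertNth]
  simp [Fin.val_last, smul_smul]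

lemma wedge_cons_flip (c : Fin q → V) (z : V) :
    wedge F (q + 1) (Fin.cons z c) = ((-1 : F) ^ q) • wedge F (q + 1) (Fin.snoc c z) := by
  rw [wedge_snoc_flip, smul_smul, ← pow_add,
    neg_one_pow_congr_mod2 (show (q + q) % 2 = 0 % 2 by omega), pow_zero, one_smul]

lemma wedge_cancel (u : Fin (q + 2) → V) (i j : Fin (q + 2)) (hij : i ≠ j) (h : u i = u j) :
    ((-1 : F) ^ (i : ℕ)) • wedge F (q + 1) (i.removeNth u) +
      ((-1 : F) ^ (j : ℕ)) • wedge F (q + 1) (j.removeNth u) = 0 := by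
  have main : ∀ (i j : Fin (q + 2)), (i : ℕ) < (j : ℕ) → u i = u j →
      ((-1 : F) ^ (i : ℕ)) • wedge F (q + 1) (i.removeNth u) +
        ((-1 : F) ^ (j : ℕ)) • wedge F (q + 1) (j.removeNth u) = 0 := by
    clear hij h i j
    intro i j hij h
    have hi1 : (i : ℕ) < q + 1 := by omega
    have hj1 : (j : ℕ) - 1 < q + 1 := by omega
    set i' : Fin (q + 1) := ⟨(i : ℕ), hi1⟩ with hi'
    set j' : Fin (q + 1) := ⟨(j : ℕ) - 1, hj1⟩ with hj'
    set w : Fin q → V := i'.removeNth (j.removeNth u) with hw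
    have hval1 : j.removeNth u i' = u i := by
      show u (j.succAbove i') = u i
      congr 1
      apply Fin.ext
      simp only [Fin.succAbove, Fin.lt_def, apply_ite Fin.val, Fin.coe_castSucc, Fin.val_succ,
        hi']
      try split_ifs <;> omega
    have h1 : j.removeNth u = i'.insertNth (u i) w := by
      rw [← hval1]
      exact (Fin.insertNth_self_removeNth i' (j.removeNth u)).symm
    have hval2 : i.removeNth u j' = u i := by
      show u (i.succAbove j') = u i
      rw [h]
      congr 1
      apply Fin.ext
      simp only [Fin.succAbove, Fin.lt_def, apply_ite Fin.val, Fin.coe_castSucc, Fin.val_succ,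
        hj']
      try split_ifs <;> omega
    have hfam : j'.removeNth (i.removeNth u) = w := by
      funext t
      exact congrArg u (succAbove_succAbove_aux i j hij t)
    have h2 : i.removeNth u = j'.insertNth (u i) w := by
      rw [← hval2, ← hfam]
      exact (Fin.insertNth_self_removeNth j' (i.removeNth u)).symm
    have hc : (-1:F)^(i:ℕ) * (-1:F)^((j:ℕ)-1) + (-1:F)^(j:ℕ) * (-1:F)^((i:ℕ)) = 0 := by
      obtain ⟨s, hs⟩ : ∃ s, (j:ℕ) = s + 1 := ⟨(j:ℕ)-1, by omega⟩
      rw [hs]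
      simp only [Nat.add_sub_cancel, pow_succ]
      ring
    apply Subtype.ext
    simp only [Submodule.coe_add, SetLike.val_smul, ZeroMemClass.coe_zero]
    show ((-1:F)^(i:ℕ)) • (ExteriorAlgebra.ιMulti F (q+1) (i.removeNth u))
        + ((-1:F)^(j:ℕ)) • ExteriorAlgebra.ιMulti F (q+1) (j.removeNth u) = 0
    rw [h1, h2, ιMulti_insertNth, ιMulti_insertNth, smul_smul, smul_smul, ← add_smul]
    show ((-1:F)^(i:ℕ) * (-1:F)^((j:ℕ)-1) + (-1:F)^(j:ℕ) * (-1:F)^((i:ℕ))) •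
      (ExteriorAlgebra.ι F (u i) * ExteriorAlgebra.ιMulti F q w) = 0
    rw [hc, zero_smul]
  rcases Nat.lt_or_ge (i : ℕ) (j : ℕ) with hlt | hge
  · exact main i j hlt h
  · have hne : (i:ℕ) ≠ (j:ℕ) := fun hh => hij (Fin.ext hh)
    exact (add_comm _ _).trans (main j i (by omega) h.symm)

end AuxWedge

section Constr
variable {F : Type*} [Field F] {V : Type*} [AddCommGroup V] [Module F V]
  {M : Type*} [AddCommGroup M] [Module F M] {q : ℕ}

/-- `ρ` composed with the wedge of a family, as an alternating map. -/
noncomputable def rhoW (ρ : ⋀[F]^(q+1) V →ₗ[F] Module.End F M) :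
    V [⋀^Fin (q+1)]→ₗ[F] Module.End F M :=
  ρ.compAlternatingMap ((ExteriorAlgebra.ιMulti F (q+1)).codRestrict (⋀[F]^(q+1) V)
    (fun v => ExteriorAlgebra.ιMulti_range F (q+1) (Set.mem_range_self v)))

lemma rhoW_apply (ρ : ⋀[F]^(q+1) V →ₗ[F] Module.End F M) (v : Fin (q+1) → V) :
    rhoW ρ v = ρ (wedge F (q+1) v) := rfl

lemma fst_update (c : Fin (q+2) → V × M) (i : Fin (q+2)) (z : V × M) :
    (fun t => ((Function.update c i z) t).1) = Function.update (fun t => (c t).1) i z.1 := by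
  funext t
  rcases eq_or_ne t i with rfl | h
  · simp
  · simp [h]

/-- One term of the second component of the bracket. -/
noncomputable def termMap (ρ : ⋀[F]^(q+1) V →ₗ[F] Module.End F M) (k : Fin (q+2)) :
    MultilinearMap F (fun _ : Fin (q+2) => V × M) M where
  toFun c := rhoW ρ (k.removeNth (fun i => (c i).1)) (c k).2
  map_update_add' := by
    intro dec c i x y
    obtain rfl : dec = instDecidableEqFin (q+2) := Subsingleton.elim _ _
    rcases eq_or_ne i k with rfl | hik
    · simp only [fst_update, Fin.removeNth_update, Function.update_self, Prod.snd_add]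
      rw [map_add]
    · obtain ⟨t, ht⟩ := Fin.exists_succAbove_eq hik
      subst ht
      simp only [fst_update, Prod.fst_add,
        Function.update_of_ne (Ne.symm (Fin.succAbove_ne k t)),
        removeNth_update_ne]
      rw [AlternatingMap.map_update_add, LinearMap.add_apply]
  map_update_smul' := by
    intro dec c i r x
    obtain rfl : dec = instDecidableEqFin (q+2) := Subsingleton.elim _ _
    rcases eq_or_ne i k with rfl | hik
    · simp only [fst_update, Fin.removeNth_update, Function.update_self, Prod.smul_snd]
      rw [map_smul]
    · obtain ⟨t, ht⟩ := Fin.exists_succAbove_eq hik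
      subst ht
      simp only [fst_update, Prod.smul_fst,
        Function.update_of_ne (Ne.symm (Fin.succAbove_ne k t)),
        removeNth_update_ne]
      rw [AlternatingMap.map_update_smul, LinearMap.smul_apply]

/-- The second component of the bracket. -/
noncomputable def muMap (ρ : ⋀[F]^(q+1) V →ₗ[F] Module.End F M) :
    MultilinearMap F (fun _ : Fin (q+2) => V × M) M :=
  ∑ k : Fin (q+2), ((-1 : F) ^ (q + 1 - (k : ℕ))) • termMap ρ k

lemma muMap_apply (ρ : ⋀[F]^(q+1) V →ₗ[F] Module.End F M) (c : Fin (q+2) → V × M) :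
    muMap ρ c = ∑ k : Fin (q+2), ((-1 : F) ^ (q + 1 - (k : ℕ))) •
      rhoW ρ (k.removeNth (fun i => (c i).1)) ((c k).2) := by
  rw [muMap, MultilinearMap.sum_apply]
  rfl

lemma neg_one_pow_sub_eq {k : ℕ} (h : k ≤ q + 1) :
    ((-1 : F) ^ (q + 1 - k)) = (-1 : F) ^ (q + 1 + k) := by
  have h2 : q + 1 + k = (q + 1 - k) + 2 * k := by omega
  rw [h2, pow_add, pow_mul, neg_one_sq, one_pow, mul_one]

/-- The bracket on `V × M` as an alternating map. -/
noncomputable def Bprime (B : V [⋀^Fin (q+2)]→ₗ[F] V)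
    (ρ : ⋀[F]^(q+1) V →ₗ[F] Module.End F M) :
    (V × M) [⋀^Fin (q+2)]→ₗ[F] (V × M) where
  toMultilinearMap :=
    (B.toMultilinearMap.compLinearMap (fun _ => LinearMap.fst F V M)).prod (muMap ρ)
  map_eq_zero_of_eq' := by
    intro c i j hc hij
    have hc1 : (fun t => (c t).1) i = (fun t => (c t).1) j := congrArg Prod.fst hc
    refine Prod.ext (B.map_eq_zero_of_eq _ hc1 hij) ?_
    show muMap ρ c = 0
    rw [muMap_apply]
    rw [← Finset.sum_subset (Finset.subset_univ ({i, j} : Finset (Fin (q+2))))]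
    · rw [Finset.sum_pair hij]
      have hm : (c j).2 = (c i).2 := (congrArg Prod.snd hc).symm
      have key : ∀ k : Fin (q+2), ((-1:F) ^ (q + 1 - (k : ℕ))) =
          (-1:F) ^ (q + 1) * (-1:F) ^ (k : ℕ) := by
        intro k
        rw [neg_one_pow_sub_eq (by omega), pow_add]
      rw [hm, key i, key j, mul_smul, mul_smul, ← smul_add, rhoW_apply, rhoW_apply]
      have : ((-1:F)^(i:ℕ)) • (ρ (wedge F (q+1) (i.removeNth fun t => (c t).1))) ((c i).2)
          + ((-1:F)^(j:ℕ)) • (ρ (wedge F (q+1) (j.removeNth fun t => (c t).1))) ((c i).2)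
          = (ρ (((-1:F)^(i:ℕ)) • wedge F (q+1) (i.removeNth fun t => (c t).1)
            + ((-1:F)^(j:ℕ)) • wedge F (q+1) (j.removeNth fun t => (c t).1))) ((c i).2) := by
        rw [map_add, map_smul, map_smul, LinearMap.add_apply, LinearMap.smul_apply,
          LinearMap.smul_apply]
      rw [this, wedge_cancel _ i j hij hc1, map_zero, LinearMap.zero_apply, smul_zero]
    · intro k _ hk
      simp only [Finset.mem_insert, Finset.mem_singleton, not_or] at hk
      obtain ⟨hki, hkj⟩ := hk
      obtain ⟨t1, ht1⟩ := Fin.exists_succAbove_eq (Ne.symm hki)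
      obtain ⟨t2, ht2⟩ := Fin.exists_succAbove_eq (Ne.symm hkj)
      have htt : t1 ≠ t2 := by
        intro hh
        exact hij (by rw [← ht1, ← ht2, hh])
      have hz : rhoW ρ (k.removeNth fun t => (c t).1) = 0 := by
        refine AlternatingMap.map_eq_zero_of_eq _ _ ?_ htt
        show (c (k.succAbove t1)).1 = (c (k.succAbove t2)).1
        rw [ht1, ht2, hc]
      rw [hz]
      simp

lemma Bprime_fst (B : V [⋀^Fin (q+2)]→ₗ[F] V) (ρ : ⋀[F]^(q+1) V →ₗ[F] Module.End F M)
    (c : Fin (q+2) → V × M) : (Bprime B ρ c).1 = B (fun i => (c i).1) := rfl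

lemma Bprime_snd (B : V [⋀^Fin (q+2)]→ₗ[F] V) (ρ : ⋀[F]^(q+1) V →ₗ[F] Module.End F M)
    (c : Fin (q+2) → V × M) : (Bprime B ρ c).2 = muMap ρ c := rfl

end Constr

/-- Given an `n`-Lie algebra `(V,B)` and a Lie algebra representation
`ρ : ⋀^{n-1}V → End_F(M)` (for the bracket `Br` induced by `B` on `⋀^{n-1}V`) on which the
relations `ρ(B(a_1,…,a_n)∧a_{n+1}∧⋯∧a_{2n-2}) = Σ_{i=1}^n (−1)^{i+n}
ρ(a_1∧⋯∧â_i∧⋯∧a_n)∘ρ(a_i∧a_{n+1}∧⋯∧a_{2n-2})` hold, the bracket `B'` on `V ⊕ M`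
defined by `B'|_{Vⁿ} = B`, `B'(a_1,…,m at slot i,…,a_n) = (−1)^{n−i} ρ(a_1∧⋯∧â_i∧⋯∧a_n)(m)`,
and `B' = 0` when two arguments lie in `M`, is an alternating multilinear map satisfying
the Filippov–Jacobi identity; thus `M` is an `n`-Lie module over `V`. -/
theorem lie_rep_gives_nLieModule {F : Type*} [Field F] [CharZero F]
    {V : Type*} [AddCommGroup V] [Module F V] (n : ℕ) (hn : 2 ≤ n)
    (B : V [⋀^Fin n]→ₗ[F] V)
    (hB : IsFilippov (F := F) (fun v => B v))
    (M : Type*) [AddCommGroup M] [Module F M]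
    (Br : ⋀[F]^(n-1) V →ₗ[F] ⋀[F]^(n-1) V →ₗ[F] ⋀[F]^(n-1) V)
    (hBr : ∀ a b : Fin (n - 1) → V,
      Br (wedge F (n-1) a) (wedge F (n-1) b) =
        ∑ i : Fin (n - 1), wedge F (n-1) (Function.update b i (B (snocFam a (b i)))))
    (ρ : ⋀[F]^(n-1) V →ₗ[F] Module.End F M)
    (hρhom : ∀ x y : ⋀[F]^(n-1) V, ρ (Br x y) = ρ x * ρ y - ρ y * ρ x)
    (hρrel : ∀ (a : Fin n → V) (c : Fin (n - 2) → V),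
      ρ (wedge F (n-1) (consFam hn (B a) c)) =
        ∑ i : Fin n, ((-1 : F) ^ ((i : ℕ) + 1 + n)) •
          (ρ (wedge F (n-1) (omitFam hn a i)) * ρ (wedge F (n-1) (consFam hn (a i) c)))) :
    ∃ B' : (V × M) [⋀^Fin n]→ₗ[F] (V × M),
      (∀ a : Fin n → V, B' (fun i => (a i, (0 : M))) = (B a, 0)) ∧
      (∀ (i : Fin n) (a : Fin n → V) (m : M),
        B' (Function.update (fun j => ((a j : V), (0 : M))) i ((0 : V), m)) =
          (0, ((-1 : F) ^ (n - ((i : ℕ) + 1))) • ρ (wedge F (n-1) (omitFam hn a i)) m)) ∧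
      (∀ c : Fin n → V × M, ∀ i j : Fin n,
        i ≠ j → (c i).1 = 0 → (c j).1 = 0 → B' c = 0) ∧
      IsFilippov (F := F) (fun v => B' v) := by
  obtain ⟨q, rfl⟩ : ∃ q, n = q + 2 := ⟨n - 2, by omega⟩
  refine ⟨Bprime B ρ, ?_, ?_, ?_, ?_⟩
  · -- value on pure `V` families
    intro a
    refine Prod.ext rfl ?_
    show muMap ρ _ = 0
    rw [muMap_apply]
    simp
  · -- value on families with one `M` entry
    intro i a m
    refine Prod.ext ?_ ?_
    · show B (fun t => ((Function.update (fun j => ((a j : V), (0:M))) i ((0:V), m)) t).1)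
        = (0 : V)
      rw [fst_update]
      exact (B : MultilinearMap F (fun _ : Fin (q+2) => V) V).map_update_zero _ i
    · show muMap ρ _ = ((-1 : F) ^ (q + 2 - ((i : ℕ) + 1))) •
        ρ (wedge F (q+1) (omitFam hn a i)) m
      rw [muMap_apply, Finset.sum_eq_single i]
      · simp only [fst_update, Function.update_self]
        rw [Fin.removeNth_update,
          show q + 2 - ((i : ℕ) + 1) = q + 1 - (i : ℕ) by omega]
        rfl
      · intro k _ hki
        rw [Function.update_of_ne hki]
        simp
      · intro hmem
        exact absurd (Finset.mem_univ i) hmem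
  · -- vanishing on two `M` entries
    intro c i j hij h1 h2
    refine Prod.ext ?_ ?_
    · show B (fun t => (c t).1) = (0 : V)
      exact (B : MultilinearMap F (fun _ : Fin (q+2) => V) V).map_coord_zero i h1
    · show muMap ρ c = 0
      rw [muMap_apply]
      apply Finset.sum_eq_zero
      intro k _
      rcases eq_or_ne k i with rfl | hki
      · obtain ⟨t, ht⟩ := Fin.exists_succAbove_eq (Ne.symm hij)
        have hz : rhoW ρ (k.removeNth fun t => (c t).1) = 0 := by
          refine AlternatingMap.map_coord_zero _ t ?_
          show (c (k.succAbove t)).1 = 0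
          rw [ht]; exact h2
        rw [hz]; simp
      · obtain ⟨t, ht⟩ := Fin.exists_succAbove_eq (Ne.symm hki)
        have hz : rhoW ρ (k.removeNth fun t => (c t).1) = 0 := by
          refine AlternatingMap.map_coord_zero _ t ?_
          show (c (k.succAbove t)).1 = 0
          rw [ht]; exact h1
        rw [hz]; simp
  · -- the Filippov identity
    intro a b
    simp only [snocFam_eq] at hB hBr ⊢
    have hBr' : ∀ u v : Fin (q+1) → V,
        Br (wedge F (q+1) u) (wedge F (q+1) v) =
          ∑ t : Fin (q+1), wedge F (q+1) (Function.update v t (B (Fin.snoc u (v t)))) :=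
      fun u v => hBr u v
    have hρrel' : ∀ (u : Fin (q+2) → V) (c : Fin q → V),
        ρ (wedge F (q+1) (consFam hn (B u) c)) =
          ∑ k : Fin (q+2), ((-1 : F) ^ ((k : ℕ) + 1 + (q+2))) •
            (ρ (wedge F (q+1) (omitFam hn u k)) * ρ (wedge F (q+1) (consFam hn (u k) c))) :=
      fun u c => hρrel u c
    have hfam : ∀ (g : Fin (q+1) → V × M) (z : V × M),
        (fun t => ((Fin.snoc (α := fun _ => V × M) g z) t).1) =
          Fin.snoc (α := fun _ => V) (fun i => (g i).1) z.1 := by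
      intro g z
      funext t
      exact congrFun (Fin.comp_snoc Prod.fst g z) t
    have key1 : ∀ j : Fin (q+2),
        rhoW ρ (fun i => (a i).1) * rhoW ρ (j.removeNth (fun i => (b i).1))
          = rhoW ρ (j.removeNth (fun i => (b i).1)) * rhoW ρ (fun i => (a i).1)
            + ∑ t : Fin (q+1), rhoW ρ (Function.update (j.removeNth (fun i => (b i).1)) t
                (B (Fin.snoc (fun i => (a i).1) (j.removeNth (fun i => (b i).1) t)))) := by
      intro j
      have h1 := hρhom (wedge F (q+1) (fun i => (a i).1)) (wedge F (q+1) (j.removeNth (fun i => (b i).1)))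
      rw [hBr' (fun i => (a i).1) (j.removeNth (fun i => (b i).1)), map_sum] at h1
      have h2 : ∑ t : Fin (q+1), rhoW ρ (Function.update (j.removeNth (fun i => (b i).1)) t
          (B (Fin.snoc (fun i => (a i).1) (j.removeNth (fun i => (b i).1) t))))
          = rhoW ρ (fun i => (a i).1) * rhoW ρ (j.removeNth (fun i => (b i).1))
            - rhoW ρ (j.removeNth (fun i => (b i).1)) * rhoW ρ (fun i => (a i).1) := h1
      rw [h2]
      abel
    have key2 : ∀ i : Fin (q+1),
        rhoW ρ (Fin.snoc (i.removeNth (fun i => (a i).1)) (B (fun i => (b i).1)))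
          = ∑ k : Fin (q+2), ((-1:F)^(q+1-((k:ℕ)))) •
              (rhoW ρ (k.removeNth (fun i => (b i).1)) *
                rhoW ρ (Fin.snoc (i.removeNth (fun i => (a i).1)) ((b k).1))) := by
      intro i
      have h0 : ρ (wedge F (q+1) (Fin.snoc (i.removeNth (fun i => (a i).1)) (B (fun i => (b i).1))))
          = ∑ k : Fin (q+2), ((-1:F)^(q+1-((k:ℕ)))) •
              (ρ (wedge F (q+1) (k.removeNth (fun i => (b i).1))) *
                ρ (wedge F (q+1) (Fin.snoc (i.removeNth (fun i => (a i).1)) ((b k).1)))) := by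
        rw [wedge_snoc_flip, map_smul, ← consFam_eq hn (B (fun i => (b i).1)) (i.removeNth (fun i => (a i).1)),
          hρrel' (fun i => (b i).1) (i.removeNth (fun i => (a i).1)), Finset.smul_sum]
        refine Finset.sum_congr rfl fun k _ => ?_
        rw [omitFam_eq, consFam_eq, wedge_cons_flip, map_smul, mul_smul_comm, smul_smul,
          smul_smul]
        congr 1
        rw [← pow_add, ← pow_add]
        refine neg_one_pow_congr_mod2 ?_
        have : (k : ℕ) ≤ q + 1 := by omega
        omega
      exact h0
    refine Prod.ext ?_ ?_
    · -- first components
      rw [Prod.fst_sum]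
      simp only [Bprime_fst, hfam, fst_update]
      exact hB (fun i => (a i).1) (fun i => (b i).1)
    · -- second components
      rw [Prod.snd_sum]
      have hL : (Bprime B ρ (Fin.snoc a (Bprime B ρ b))).2 = (∑ i : Fin (q+1), ∑ k : Fin (q+2), (((-1:F)^(q+1-((i:ℕ)))) * ((-1:F)^(q+1-((k:ℕ))))) • rhoW ρ (k.removeNth (fun i => (b i).1)) (rhoW ρ (Fin.snoc (i.removeNth (fun i => (a i).1)) ((b k).1)) ((a i).2)) + ((∑ j : Fin (q+2), ((-1:F)^(q+1-((j:ℕ)))) • rhoW ρ (j.removeNth (fun i => (b i).1)) (rhoW ρ (fun i => (a i).1) ((b j).2))) + ∑ j : Fin (q+2), ∑ k : Fin (q+2), (if k = j then 0 else ((-1:F)^(q+1-((j:ℕ)))) • rhoW ρ (j.removeNth (Function.update (fun i => (b i).1) k (B (Fin.snoc (fun i => (a i).1) ((b k).1))))) ((b j).2)))) := by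
        rw [Bprime_snd, muMap_apply]
        simp only [hfam, Bprime_fst]
        rw [Fin.sum_univ_castSucc]
        congr 1
        · -- the castSucc part gives the first double sum
          refine Finset.sum_congr rfl fun t _ => ?_
          rw [Fin.snoc_castSucc, removeNth_castSucc_snoc, key2 t, Fin.coe_castSucc,
            LinearMap.sum_apply, Finset.smul_sum]
          refine Finset.sum_congr rfl fun k _ => ?_
          rw [LinearMap.smul_apply, Module.End.mul_apply, smul_smul]
        · -- the last part gives the remaining sums
          rw [Fin.snoc_last, Fin.val_last, Nat.sub_self, pow_zero, one_smul,
            Fin.removeNth_last, Fin.init_snoc, Bprime_snd, muMap_apply, map_sum]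
          have hstep : ∀ j : Fin (q+2), (j ∈ (Finset.univ : Finset (Fin (q+2)))) →
              rhoW ρ (fun i => (a i).1) (((-1:F)^(q+1-((j:ℕ)))) • rhoW ρ (j.removeNth (fun i => (b i).1)) ((b j).2))
              = ((-1:F)^(q+1-((j:ℕ)))) • rhoW ρ (j.removeNth (fun i => (b i).1)) (rhoW ρ (fun i => (a i).1) ((b j).2))
                + ∑ k : Fin (q+2), (if k = j then 0 else ((-1:F)^(q+1-((j:ℕ)))) •
                    rhoW ρ (j.removeNth (Function.update (fun i => (b i).1) k
                      (B (Fin.snoc (fun i => (a i).1) ((b k).1))))) ((b j).2)) := by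
            intro j _
            rw [map_smul]
            have e1 : rhoW ρ (fun i => (a i).1) (rhoW ρ (j.removeNth (fun i => (b i).1)) ((b j).2))
                = (rhoW ρ (fun i => (a i).1) * rhoW ρ (j.removeNth (fun i => (b i).1))) ((b j).2) := rfl
            rw [e1, key1 j, LinearMap.add_apply, Module.End.mul_apply,
              LinearMap.sum_apply, smul_add, Finset.smul_sum]
            congr 1
            rw [Fin.sum_univ_succAbove (fun k => if k = j then 0 else ((-1:F)^(q+1-((j:ℕ)))) •
              rhoW ρ (j.removeNth (Function.update (fun i => (b i).1) k
                (B (Fin.snoc (fun i => (a i).1) ((b k).1))))) ((b j).2)) j]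
            rw [if_pos rfl, zero_add]
            refine Finset.sum_congr rfl fun t _ => ?_
            rw [if_neg (Fin.succAbove_ne j t), removeNth_update_ne]
            rfl
          rw [Finset.sum_congr rfl hstep, Finset.sum_add_distrib]
      have hR : (∑ k : Fin (q+2),
          (Bprime B ρ (Function.update b k (Bprime B ρ (Fin.snoc a (b k))))).2) = (∑ i : Fin (q+1), ∑ k : Fin (q+2), (((-1:F)^(q+1-((i:ℕ)))) * ((-1:F)^(q+1-((k:ℕ))))) • rhoW ρ (k.removeNth (fun i => (b i).1)) (rhoW ρ (Fin.snoc (i.removeNth (fun i => (a i).1)) ((b k).1)) ((a i).2)) + ((∑ j : Fin (q+2), ((-1:F)^(q+1-((j:ℕ)))) • rhoW ρ (j.removeNth (fun i => (b i).1)) (rhoW ρ (fun i => (a i).1) ((b j).2))) + ∑ j : Fin (q+2), ∑ k : Fin (q+2), (if k = j then 0 else ((-1:F)^(q+1-((j:ℕ)))) • rhoW ρ (j.removeNth (Function.update (fun i => (b i).1) k (B (Fin.snoc (fun i => (a i).1) ((b k).1))))) ((b j).2)))) := by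
        have hRk : ∀ k : Fin (q+2), (k ∈ (Finset.univ : Finset (Fin (q+2)))) →
            (Bprime B ρ (Function.update b k (Bprime B ρ (Fin.snoc a (b k))))).2
            = ((∑ i : Fin (q+1), (((-1:F)^(q+1-((i:ℕ)))) * ((-1:F)^(q+1-((k:ℕ))))) •
                  rhoW ρ (k.removeNth (fun i => (b i).1))
                    (rhoW ρ (Fin.snoc (i.removeNth (fun i => (a i).1)) ((b k).1)) ((a i).2)))
                + ((-1:F)^(q+1-((k:ℕ)))) • rhoW ρ (k.removeNth (fun i => (b i).1)) (rhoW ρ (fun i => (a i).1) ((b k).2)))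
              + ∑ j : Fin (q+2), (if j = k then 0 else ((-1:F)^(q+1-((j:ℕ)))) •
                  rhoW ρ (j.removeNth (Function.update (fun i => (b i).1) k
                    (B (Fin.snoc (fun i => (a i).1) ((b k).1))))) ((b j).2)) := by
          intro k _
          rw [Bprime_snd, muMap_apply]
          simp only [fst_update, Bprime_fst, hfam]
          rw [Fin.sum_univ_succAbove _ k]
          congr 1
          · -- the pivot term
            rw [Function.update_self, Fin.removeNth_update, Bprime_snd, muMap_apply]
            simp only [hfam]
            rw [Fin.sum_univ_castSucc, Fin.snoc_last, Fin.val_last, Nat.sub_self, pow_zero,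
              one_smul, Fin.removeNth_last, Fin.init_snoc, map_add, smul_add]
            congr 1
            rw [map_sum, Finset.smul_sum]
            refine Finset.sum_congr rfl fun i _ => ?_
            rw [Fin.snoc_castSucc, removeNth_castSucc_snoc, Fin.coe_castSucc, map_smul,
              smul_smul, mul_comm ((-1:F)^(q+1-((k:ℕ)))) ((-1:F)^(q+1-((i:ℕ))))]
          · -- the off-pivot terms
            rw [Fin.sum_univ_succAbove (fun j => if j = k then 0 else ((-1:F)^(q+1-((j:ℕ)))) •
              rhoW ρ (j.removeNth (Function.update (fun i => (b i).1) k
                (B (Fin.snoc (fun i => (a i).1) ((b k).1))))) ((b j).2)) k]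
            rw [if_pos rfl, zero_add]
            refine Finset.sum_congr rfl fun t _ => ?_
            rw [if_neg (Fin.succAbove_ne k t), Function.update_of_ne (Fin.succAbove_ne k t)]
        rw [Finset.sum_congr rfl hRk, Finset.sum_add_distrib, Finset.sum_add_distrib]
        rw [add_assoc]
        congr 1
        · -- double sum over (k, i) ↦ (i, k)
          rw [Finset.sum_comm]
        congr 1
        · -- the `(j = k)`-sum: swap and flip the `if` condition
          rw [Finset.sum_comm]
          refine Finset.sum_congr rfl fun j _ => ?_
          refine Finset.sum_congr rfl fun k _ => ?_
          rcases eq_or_ne k j with rfl | hkj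
          · simp
          · rw [if_neg hkj, if_neg (Ne.symm hkj)]
      rw [hL, hR]
end

section
/- Let L be a Lie algebra over ℂ and let M be a nonzero irreducible L-module (its only Lie submodules are 0 and M) whose dimension over ℂ is countable (Module.rank ℂ M ≤ ℵ₀). If z ∈ L is central, i.e. ⁅z,x⁆ = 0 for all x ∈ L, then z acts on M by a scalar: there exists c ∈ ℂ such that ⁅z,m⁆ = c • m for all m ∈ M. -/
open Polynomial Module

/-- If every `f - c • 1` is injective, then `aeval f (C b * ∏ (X - C a))` is injective
for `b ≠ 0`. -/
private lemma aeval_prod_injective {M : Type*} [AddCommGroup M] [Module ℂ M]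
    (f : Module.End ℂ M)
    (hinj : ∀ c : ℂ, Function.Injective (f - c • (1 : Module.End ℂ M)))
    (b : ℂ) (hb : b ≠ 0) (t : Multiset ℂ) :
    Function.Injective (Polynomial.aeval f (C b * (t.map fun a => X - C a).prod)) := by
  induction t using Multiset.induction with
  | empty =>
      simp only [Multiset.map_zero, Multiset.prod_zero, mul_one, aeval_C]
      intro x y hxy
      simp only [Algebra.algebraMap_eq_smul_one, LinearMap.smul_apply, Module.End.one_apply] at hxy
      exact smul_right_injective M hb hxy
  | cons a t ih =>
      have : C b * ((a ::ₘ t).map fun a => X - C a).prod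
          = (X - C a) * (C b * (t.map fun a => X - C a).prod) := by
        rw [Multiset.map_cons, Multiset.prod_cons]; ring
      rw [this, map_mul]
      have h1 : (Polynomial.aeval f) (X - C a) = f - a • (1 : Module.End ℂ M) := by
        simp [Algebra.algebraMap_eq_smul_one]
      intro x y hxy
      simp only [Module.End.mul_apply] at hxy
      rw [h1] at hxy
      exact ih (hinj a hxy)

/-- If every `f - c • 1` is injective, then `aeval f p` is injective for any nonzero
polynomial `p` over `ℂ`. -/
private lemma aeval_injective_of_no_eigenvalue {M : Type*} [AddCommGroup M] [Module ℂ M]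
    (f : Module.End ℂ M)
    (hinj : ∀ c : ℂ, Function.Injective (f - c • (1 : Module.End ℂ M)))
    (p : ℂ[X]) (hp : p ≠ 0) : Function.Injective (Polynomial.aeval f p) := by
  have hsplit : p.Splits := IsAlgClosed.splits p
  have hfact := hsplit.eq_prod_roots
  have hlead : p.leadingCoeff ≠ 0 := Polynomial.leadingCoeff_ne_zero.mpr hp
  rw [hfact]
  exact aeval_prod_injective f hinj _ hlead _

/-- Dixmier–Schur lemma: if `M` is a nonzero irreducible Lie module of countable
dimension over a complex Lie algebra `L`, then any central element `z` of `L`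
acts on `M` by a scalar. -/
theorem central_acts_by_scalar_on_irreducible
    (L : Type*) [LieRing L] [LieAlgebra ℂ L]
    (M : Type*) [AddCommGroup M] [Module ℂ M] [LieRingModule L M] [LieModule ℂ L M]
    (hMne : Nontrivial M)
    (hirr : ∀ N : LieSubmodule ℂ L M, N = ⊥ ∨ N = ⊤)
    (hdim : Module.rank ℂ M ≤ Cardinal.aleph0)
    (z : L) (hz : ∀ x : L, ⁅z, x⁆ = 0) :
    ∃ c : ℂ, ∀ m : M, ⁅z, m⁆ = c • m := by
  classical
  -- the action of `z` as a linear endomorphism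
  set f : Module.End ℂ M := LieModule.toEnd ℂ L M z with hf
  have hfapp : ∀ m : M, f m = ⁅z, m⁆ := fun m => rfl
  -- `f` is `L`-equivariant
  have hequiv : ∀ (x : L) (m : M), f ⁅x, m⁆ = ⁅x, f m⁆ := by
    intro x m
    rw [hfapp, hfapp, leibniz_lie, hz x, zero_lie, zero_add]
  -- `g c := f - c • 1` is `L`-equivariant
  set g : ℂ → Module.End ℂ M := fun c => f - c • (1 : Module.End ℂ M) with hg
  have hgapp : ∀ (c : ℂ) (m : M), g c m = f m - c • m := by
    intro c m; simp [hg]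
  have hgpol : ∀ c : ℂ, (Polynomial.aeval f) (X - C c) = g c := by
    intro c; simp [hg, Algebra.algebraMap_eq_smul_one]
  have hgequiv : ∀ (c : ℂ) (x : L) (m : M), g c ⁅x, m⁆ = ⁅x, g c m⁆ := by
    intro c x m
    rw [hgapp, hgapp, hequiv, lie_sub, lie_smul]
  -- injective equivariant maps are surjective, by irreducibility applied to the range
  have key : ∀ c : ℂ, Function.Injective (g c) → Function.Surjective (g c) := by
    intro c hinj
    set N : LieSubmodule ℂ L M :=
      { toSubmodule := LinearMap.range (g c)
        lie_mem := by
          intro x m hm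
          simp only [Submodule.mem_carrier, LinearMap.mem_range] at hm ⊢
          obtain ⟨n, rfl⟩ := hm
          exact ⟨⁅x, n⁆, hgequiv c x n⟩ } with hN
    rcases hirr N with h | h
    · exfalso
      obtain ⟨m, hm⟩ := exists_ne (0 : M)
      have hmem : g c m ∈ N := LinearMap.mem_range_self _ m
      rw [h] at hmem
      have h0 : g c m = 0 := (LieSubmodule.mem_bot _).mp hmem
      have : g c m = g c 0 := by simpa using h0
      exact hm (hinj this)
    · intro m
      have : m ∈ N := h ▸ LieSubmodule.mem_top m
      exact (LinearMap.mem_range).mp this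
  by_cases hno : ∀ c : ℂ, Function.Injective (g c)
  · -- no eigenvalue: derive a contradiction from countable dimension
    exfalso
    have hbij : ∀ c : ℂ, Function.Bijective (g c) := fun c => ⟨hno c, key c (hno c)⟩
    have hunit : ∀ c : ℂ, IsUnit (g c) := fun c => (Module.End.isUnit_iff _).mpr (hbij c)
    choose u hu using hunit
    obtain ⟨m₀, hm₀⟩ := exists_ne (0 : M)
    -- the family `c ↦ (g c)⁻¹ m₀` is linearly independent
    have hLI : LinearIndependent ℂ (fun c : ℂ => (((u c)⁻¹ : (Module.End ℂ M)ˣ) : Module.End ℂ M) m₀) := by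
      rw [linearIndependent_iff']
      intro s a hsum c hc
      set P : Module.End ℂ M := (Polynomial.aeval f) (∏ d ∈ s, (X - C d)) with hP
      have hPu : ∀ c' ∈ s, P * (((u c')⁻¹ : (Module.End ℂ M)ˣ) : Module.End ℂ M)
          = (Polynomial.aeval f) (∏ d ∈ s.erase c', (X - C d)) := by
        intro c' hc'
        have hfac : (∏ d ∈ s, (X - C d)) = (X - C c') * ∏ d ∈ s.erase c', (X - C d) := by
          rw [← Finset.prod_erase_mul s _ hc', mul_comm]
        have hcomm : Commute ((Polynomial.aeval f) (∏ d ∈ s.erase c', (X - C d)))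
            (((u c')⁻¹ : (Module.End ℂ M)ˣ) : Module.End ℂ M) := by
          have h1 : Commute ((Polynomial.aeval f) (∏ d ∈ s.erase c', (X - C d))) ((u c' : Module.End ℂ M)) := by
            rw [hu c', ← hgpol c']
            exact (Commute.all _ _).map (Polynomial.aeval f).toRingHom.toMonoidHom
          exact h1.units_inv_right
        rw [hP, hfac, map_mul, hgpol, mul_assoc, hcomm.eq, ← mul_assoc, ← hu c',
          Units.mul_inv, one_mul]
      -- apply `P` to the vanishing sum
      have hsum2 : ∑ c' ∈ s, a c' • ((Polynomial.aeval f) (∏ d ∈ s.erase c', (X - C d))) m₀ = 0 := by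
        have h := congrArg (fun m => P m) hsum
        simp only [map_sum, map_smul, map_zero] at h
        calc ∑ c' ∈ s, a c' • ((Polynomial.aeval f) (∏ d ∈ s.erase c', (X - C d))) m₀
            = ∑ c' ∈ s, a c' • P ((((u c')⁻¹ : (Module.End ℂ M)ˣ) : Module.End ℂ M) m₀) := by
              refine Finset.sum_congr rfl fun c' hc' => ?_
              rw [← hPu c' hc']; rfl
          _ = 0 := h
      -- package as a polynomial identity
      set q : ℂ[X] := ∑ c' ∈ s, C (a c') * ∏ d ∈ s.erase c', (X - C d) with hq
      have hqm₀ : (Polynomial.aeval f) q m₀ = 0 := by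
        rw [hq, map_sum, LinearMap.coe_sum, Finset.sum_apply]
        rw [← hsum2]
        refine Finset.sum_congr rfl fun c' _ => ?_
        rw [map_mul, aeval_C, Algebra.algebraMap_eq_smul_one]
        simp
      have hq0 : q = 0 := by
        by_contra hne
        exact hm₀ (aeval_injective_of_no_eigenvalue f hno q hne (by simpa using hqm₀))
      -- evaluate at `c`
      have hev := congrArg (fun p => Polynomial.eval c p) hq0
      simp only [hq, eval_finset_sum, eval_mul, eval_C, eval_prod, eval_sub, eval_X,
        eval_zero] at hev
      rw [Finset.sum_eq_single c] at hev
      · have hprod : (∏ d ∈ s.erase c, (c - d)) ≠ 0 := by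
          apply Finset.prod_ne_zero_iff.mpr
          intro d hd
          exact sub_ne_zero.mpr (Ne.symm (Finset.ne_of_mem_erase hd))
        exact (mul_eq_zero.mp hev).resolve_right hprod
      · intro b hb hbc
        have hcm : c ∈ s.erase b := Finset.mem_erase.mpr ⟨Ne.symm hbc, hc⟩
        rw [Finset.prod_eq_zero hcm (by simp)]
        ring
      · intro hcs; exact absurd hc hcs
    -- contradiction with countable rank
    have hle := hLI.cardinal_lift_le_rank
    have h2 : Cardinal.lift.{_} (Cardinal.mk ℂ) ≤ Cardinal.lift.{_} Cardinal.aleph0 :=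
      hle.trans (Cardinal.lift_le.mpr hdim)
    rw [Cardinal.mk_complex, Cardinal.lift_continuum, Cardinal.lift_aleph0] at h2
    exact absurd h2 (not_le.mpr Cardinal.aleph0_lt_continuum)
  · -- some `g c` has a nontrivial kernel, which is a Lie submodule, hence everything
    push_neg at hno
    obtain ⟨c, hc⟩ := hno
    refine ⟨c, ?_⟩
    set N : LieSubmodule ℂ L M :=
      { toSubmodule := LinearMap.ker (g c)
        lie_mem := by
          intro x m hm
          simp only [Submodule.mem_carrier, SetLike.mem_coe, LinearMap.mem_ker] at hm ⊢
          rw [hgequiv c x m, hm, lie_zero] } with hN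
    have hNne : N ≠ ⊥ := by
      intro h
      apply hc
      intro x y hxy
      have hker : g c (x - y) = 0 := by rw [map_sub, hxy, sub_self]
      have hmem : x - y ∈ N := hker
      rw [h] at hmem
      exact sub_eq_zero.mp ((LieSubmodule.mem_bot _).mp hmem)
    have hNtop : N = ⊤ := (hirr N).resolve_left hNne
    intro m
    have hm : m ∈ N := hNtop ▸ LieSubmodule.mem_top m
    have h0 : g c m = 0 := hm
    rw [hgapp] at h0
    rw [← hfapp]
    exact sub_eq_zero.mp h0
end

section
/- Let L be a Lie algebra over ℂ, let I be a Lie ideal of L contained in the center of L (⁅x,y⁆ = 0 for all x ∈ I, y ∈ L), and let S be a Lie subalgebra of L such that L = I ⊕ S as ℂ-vector spaces (I and S are complementary subspaces). Let M be a nonzero irreducible L-module whose dimension over ℂ is countable. Then: (a) there exists a ℂ-linear functional λ : I → ℂ such that ⁅x,m⁆ = λ(x) • m for all x ∈ I and m ∈ M; and (b) M is irreducible as a module over S, i.e. the only S-invariant subspaces of M are 0 and M. -/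
open Polynomial

lemma aux_aeval_injective {M : Type*} [AddCommGroup M] [Module ℂ M]
    (f : Module.End ℂ M)
    (hinj : ∀ c : ℂ, Function.Injective (f - c • (1 : Module.End ℂ M))) :
    ∀ (n : ℕ) (q : ℂ[X]), q.natDegree = n → q ≠ 0 → Function.Injective (aeval f q) := by
  intro n
  induction n using Nat.strong_induction_on with
  | _ n ih =>
    intro q hdeg hq
    rcases eq_or_ne n 0 with h0 | h0
    · obtain ⟨c, rfl⟩ := Polynomial.natDegree_eq_zero.mp (h0 ▸ hdeg)
      have hc : c ≠ 0 := fun h => hq (by simp [h])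
      intro a b hab
      simp only [aeval_C, Algebra.algebraMap_eq_smul_one, LinearMap.smul_apply,
        Module.End.one_apply] at hab
      exact smul_right_injective M hc hab
    · have hdpos : 0 < q.degree := by
        rw [Polynomial.natDegree_pos_iff_degree_pos.symm]
        omega
      obtain ⟨r, hr⟩ := Complex.exists_root hdpos
      obtain ⟨q', rfl⟩ := Polynomial.dvd_iff_isRoot.mpr hr
      have hX : (X - C r) ≠ 0 := Polynomial.X_sub_C_ne_zero r
      have hq' : q' ≠ 0 := fun h => hq (by simp [h])
      have hdeg' : q'.natDegree < n := by
        have := Polynomial.natDegree_mul hX hq'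
        rw [hdeg] at this
        simp [Polynomial.natDegree_X_sub_C] at this
        omega
      have h1 : aeval f (X - C r) = f - r • 1 := by
        simp [Algebra.algebraMap_eq_smul_one]
      rw [map_mul]
      intro a b hab
      simp only [Module.End.mul_apply] at hab
      exact ih _ hdeg' q' rfl hq' (hinj r (h1 ▸ hab))

lemma aux_scalar_action {L : Type*} [LieRing L] [LieAlgebra ℂ L]
    {M : Type*} [AddCommGroup M] [Module ℂ M] [LieRingModule L M] [LieModule ℂ L M]
    (hMne : Nontrivial M)
    (hirr : ∀ N : LieSubmodule ℂ L M, N = ⊥ ∨ N = ⊤)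
    (hdim : Module.rank ℂ M ≤ Cardinal.aleph0)
    (f : Module.End ℂ M) (hequiv : ∀ (y : L) (m : M), ⁅y, f m⁆ = f ⁅y, m⁆) :
    ∃ c : ℂ, ∀ m : M, f m = c • m := by
  classical
  set g : ℂ → Module.End ℂ M := fun c => f - c • 1 with hg
  have hgequiv : ∀ (c : ℂ) (y : L) (m : M), ⁅y, g c m⁆ = g c ⁅y, m⁆ := by
    intro c y m
    simp only [hg, LinearMap.sub_apply, LinearMap.smul_apply, Module.End.one_apply,
      lie_sub, lie_smul, hequiv]
  -- kernels as Lie submodules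
  have hker : ∀ c : ℂ, (∃ N : LieSubmodule ℂ L M,
      (N : Submodule ℂ M) = LinearMap.ker (g c)) := by
    intro c
    refine ⟨{ LinearMap.ker (g c) with lie_mem := ?_ }, rfl⟩
    intro y m hm
    simp only [Submodule.mem_carrier, SetLike.mem_coe, LinearMap.mem_ker] at hm ⊢
    rw [← hgequiv, hm, lie_zero]
  by_contra hno
  push_neg at hno
  -- every g c is injective
  have hinj : ∀ c : ℂ, Function.Injective (g c) := by
    intro c
    obtain ⟨N, hN⟩ := hker c
    rcases hirr N with h | h
    · rw [← LinearMap.ker_eq_bot, ← hN, h, LieSubmodule.bot_toSubmodule]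
    · exfalso
      obtain ⟨m, hm⟩ := hno c
      apply hm
      have : m ∈ LinearMap.ker (g c) := by
        rw [← hN, h]; trivial
      have := LinearMap.mem_ker.mp this
      simp only [hg, LinearMap.sub_apply, LinearMap.smul_apply, Module.End.one_apply,
        sub_eq_zero] at this
      exact this
  -- every g c is surjective
  have hsurj : ∀ c : ℂ, Function.Surjective (g c) := by
    intro c
    have hrange : ∃ N : LieSubmodule ℂ L M, (N : Submodule ℂ M) = LinearMap.range (g c) := by
      refine ⟨{ LinearMap.range (g c) with lie_mem := ?_ }, rfl⟩
      rintro y m ⟨m', rfl⟩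
      exact ⟨⁅y, m'⁆, (hgequiv c y m').symm⟩
    obtain ⟨N, hN⟩ := hrange
    rcases hirr N with h | h
    · exfalso
      obtain ⟨m, hm⟩ := hno c
      have hmem : g c m ∈ LinearMap.range (g c) := ⟨m, rfl⟩
      rw [← hN, h] at hmem
      simp only [LieSubmodule.bot_toSubmodule, Submodule.mem_bot] at hmem
      apply hm
      simpa only [hg, LinearMap.sub_apply, LinearMap.smul_apply, Module.End.one_apply,
        sub_eq_zero] using hmem
    · rw [← LinearMap.range_eq_top, ← hN, h, LieSubmodule.top_toSubmodule]
  have hbij : ∀ c : ℂ, Function.Bijective (g c) := fun c => ⟨hinj c, hsurj c⟩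
  obtain ⟨m₀, hm₀⟩ := exists_ne (0 : M)
  set e : ℂ → (M ≃ₗ[ℂ] M) := fun c => LinearEquiv.ofBijective (g c) (hbij c) with he
  set v : ℂ → M := fun c => (e c).symm m₀ with hv
  have hgv : ∀ c : ℂ, g c (v c) = m₀ := fun c => (e c).apply_symm_apply m₀
  -- v is linearly independent
  have hli : LinearIndependent ℂ v := by
    rw [linearIndependent_iff']
    intro s a hsum i hi
    by_contra hai
    set q : ℂ[X] := ∑ j ∈ s, C (a j) * ∏ k ∈ s.erase j, (X - C k) with hqdef
    have hq0 : q ≠ 0 := by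
      intro h
      have hev : q.eval i = a i * ∏ k ∈ s.erase i, (i - k) := by
        rw [hqdef]
        rw [Polynomial.eval_finset_sum]
        rw [Finset.sum_eq_single i]
        · simp [Polynomial.eval_prod]
        · intro j hj hji
          have : i ∈ s.erase j := Finset.mem_erase.mpr ⟨hji.symm, hi⟩
          simp only [eval_mul, eval_C, eval_prod, eval_sub, eval_X]
          rw [Finset.prod_eq_zero this (by ring)]
          ring
        · intro h; exact absurd hi h
      rw [h] at hev
      simp only [eval_zero] at hev
      have h1 : a i ≠ 0 := hai
      have h2 : ∏ k ∈ s.erase i, (i - k) ≠ 0 := by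
        apply Finset.prod_ne_zero_iff.mpr
        intro k hk
        exact sub_ne_zero.mpr (Finset.ne_of_mem_erase hk).symm
      exact mul_ne_zero h1 h2 hev.symm
    have hXC : ∀ c : ℂ, aeval f (X - C c) = g c := by
      intro c; simp [hg, Algebra.algebraMap_eq_smul_one]
    have hqm : aeval f q m₀ = 0 := by
      have key : ∀ j ∈ s, aeval f (∏ k ∈ s.erase j, (X - C k)) m₀
          = aeval f (∏ k ∈ s, (X - C k)) (v j) := by
        intro j hj
        conv_rhs => rw [← Finset.prod_erase_mul s _ hj]
        rw [map_mul, Module.End.mul_apply, hXC, hgv]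
      calc aeval f q m₀
          = ∑ j ∈ s, a j • aeval f (∏ k ∈ s.erase j, (X - C k)) m₀ := by
            rw [hqdef, map_sum, LinearMap.sum_apply]
            refine Finset.sum_congr rfl fun j hj => ?_
            rw [map_mul, aeval_C, Module.End.mul_apply, Algebra.algebraMap_eq_smul_one]
            simp
        _ = ∑ j ∈ s, a j • aeval f (∏ k ∈ s, (X - C k)) (v j) := by
            refine Finset.sum_congr rfl fun j hj => by rw [key j hj]
        _ = aeval f (∏ k ∈ s, (X - C k)) (∑ j ∈ s, a j • v j) := by
            rw [map_sum]
            refine Finset.sum_congr rfl fun j hj => ?_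
            rw [map_smul]
        _ = 0 := by rw [hsum, map_zero]
    have hinj' : Function.Injective (aeval f q) :=
      aux_aeval_injective f (fun c => hinj c) q.natDegree q rfl hq0
    have : m₀ = 0 := by
      apply hinj'
      rw [hqm, map_zero]
    exact hm₀ this
  -- cardinality contradiction
  have h1 := hli.cardinal_lift_le_rank
  rw [Cardinal.mk_complex] at h1
  have h2 : Cardinal.lift.{0} (Module.rank ℂ M) ≤ Cardinal.lift.{0} Cardinal.aleph0 :=
    Cardinal.lift_le.mpr hdim
  have h3 := h1.trans h2
  rw [Cardinal.lift_aleph0, Cardinal.lift_continuum] at h3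
  exact absurd h3 (not_le.mpr Cardinal.aleph0_lt_continuum)

/-- Let `L` be a complex Lie algebra, `I` a central Lie ideal, and `S` a Lie subalgebra with
`L = I ⊕ S` as vector spaces. If `M` is a nonzero irreducible `L`-module of countable
dimension, then (a) `I` acts by scalars via a linear functional `λ : I → ℂ`, and
(b) `M` is irreducible as an `S`-module. -/
theorem central_ideal_scalar_and_irreducible_over_complement
    (L : Type*) [LieRing L] [LieAlgebra ℂ L]
    (I : LieIdeal ℂ L) (hI : ∀ x ∈ I, ∀ y : L, ⁅x, y⁆ = 0)
    (S : LieSubalgebra ℂ L)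
    (hcompl : IsCompl (LieSubmodule.toSubmodule I) S.toSubmodule)
    (M : Type*) [AddCommGroup M] [Module ℂ M] [LieRingModule L M] [LieModule ℂ L M]
    (hMne : Nontrivial M)
    (hirr : ∀ N : LieSubmodule ℂ L M, N = ⊥ ∨ N = ⊤)
    (hdim : Module.rank ℂ M ≤ Cardinal.aleph0) :
    (∃ lam : I →ₗ[ℂ] ℂ, ∀ (x : I) (m : M), ⁅(x : L), m⁆ = lam x • m) ∧
    (∀ N : Submodule ℂ M, (∀ s ∈ S, ∀ m ∈ N, ⁅s, m⁆ ∈ N) → N = ⊥ ∨ N = ⊤) := by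
  obtain ⟨m₀, hm₀⟩ := exists_ne (0 : M)
  have key : ∀ x : I, ∃ c : ℂ, ∀ m : M, ⁅(x : L), m⁆ = c • m := by
    intro x
    have hx := x.2
    have hequiv : ∀ (y : L) (m : M),
        ⁅y, (LieModule.toEnd ℂ L M (x : L)) m⁆ = (LieModule.toEnd ℂ L M (x : L)) ⁅y, m⁆ := by
      intro y m
      simp only [LieModule.toEnd_apply_apply]
      rw [leibniz_lie]
      have hyx : ⁅y, (x : L)⁆ = 0 := by
        rw [← neg_neg ⁅y, (x : L)⁆, ← lie_skew, hI _ hx y]; simp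
      rw [hyx, zero_lie, zero_add]
    obtain ⟨c, hc⟩ := aux_scalar_action hMne hirr hdim _ hequiv
    exact ⟨c, fun m => by simpa using hc m⟩
  choose c hc using key
  have hcadd : ∀ x y : I, c (x + y) = c x + c y := by
    intro x y
    apply smul_left_injective ℂ hm₀
    show c (x + y) • m₀ = (c x + c y) • m₀
    rw [← hc (x + y) m₀]
    have hco : ((x + y : I) : L) = (x : L) + (y : L) := rfl
    rw [hco, add_lie, hc x m₀, hc y m₀, add_smul]
  have hcsmul : ∀ (a : ℂ) (x : I), c (a • x) = a * c x := by
    intro a x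
    apply smul_left_injective ℂ hm₀
    show c (a • x) • m₀ = (a * c x) • m₀
    rw [← hc (a • x) m₀]
    have hco : ((a • x : I) : L) = a • (x : L) := rfl
    rw [hco, smul_lie, hc x m₀, smul_smul]
  refine ⟨⟨{ toFun := c
             map_add' := hcadd
             map_smul' := fun a x => by simpa using hcsmul a x },
           fun x m => hc x m⟩, ?_⟩
  intro N hN
  have lie_mem : ∀ {y : L} {m : M}, m ∈ N → ⁅y, m⁆ ∈ N := by
    intro y m hm
    have hy : y ∈ (LieSubmodule.toSubmodule I) ⊔ S.toSubmodule := by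
      rw [hcompl.sup_eq_top]; trivial
    obtain ⟨a, ha, b, hb, rfl⟩ := Submodule.mem_sup.mp hy
    rw [add_lie]
    refine N.add_mem ?_ (hN b hb m hm)
    have h2 : ⁅a, m⁆ = c ⟨a, ha⟩ • m := hc ⟨a, ha⟩ m
    rw [h2]
    exact N.smul_mem _ hm
  let N' : LieSubmodule ℂ L M := { N with lie_mem := lie_mem }
  rcases hirr N' with h | h
  · left
    rw [eq_bot_iff]
    intro m hm
    have hmem : m ∈ N' := hm
    rw [h] at hmem
    simpa using hmem
  · right
    rw [eq_top_iff]
    intro m _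
    have hmem : m ∈ N' := by rw [h]; trivial
    exact hmem
end
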